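/- arXiv:1709.01649 — 6 statements merged into one kernel-verified Lean document; each statement's English description precedes it below -/
import Mathlib

section
/- Let A be a unital C*-algebra and let S ⊂ A be an operator system. If a state ψ on A is S-peaking, then ψ is a pure state and ψ has the unique extension property with respect to S. -/
open Filter Topology
open scoped ComplexOrder

/-- A state on a unital C⋆-algebra: a positive linear functional of norm one. -/
def IsState {A : Type*} [CStarAlgebra A] (φ : A →L[ℂ] ℂ) : Prop :=
  ‖φ‖ = 1 ∧ ∀ a : A, 0 ≤ φ (star a * a)

/-- A pure state: an extreme point of the state space. -/
def IsPureState {A : Type*} [CStarAlgebra A] (ψ : A →L[ℂ] ℂ) : Prop :=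
  IsState ψ ∧ ∀ (φ₁ φ₂ : A →L[ℂ] ℂ) (t : ℝ), IsState φ₁ → IsState φ₂ →
    0 < t → t < 1 → ψ = (t : ℂ) • φ₁ + ((1 - t : ℝ) : ℂ) • φ₂ → φ₁ = ψ ∧ φ₂ = ψ

/-- A state `ψ` is `S`-peaking if there is a self-adjoint `s ∈ S` of norm one with
`ψ s = 1` and `|φ s| < 1` for every state `φ ≠ ψ`. -/
def IsSPeaking {A : Type*} [CStarAlgebra A] (S : Submodule ℂ A) (ψ : A →L[ℂ] ℂ) : Prop :=
  ∃ s ∈ S, IsSelfAdjoint s ∧ ‖s‖ = 1 ∧ ψ s = 1 ∧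
    ∀ φ : A →L[ℂ] ℂ, IsState φ → φ ≠ ψ → ‖φ s‖ < 1

/-- The unique extension property of a state with respect to an operator system. -/
def HasUEP {A : Type*} [CStarAlgebra A] (S : Submodule ℂ A) (ψ : A →L[ℂ] ℂ) : Prop :=
  ∀ φ : A →L[ℂ] ℂ, IsState φ → (∀ s ∈ S, φ s = ψ s) → φ = ψ

/-- an `S`-peaking state is pure and has the unique extension property
with respect to `S`. -/
theorem stmt0 {A : Type*} [CStarAlgebra A]
    (S : Submodule ℂ A) (hS1 : (1 : A) ∈ S) (hSstar : ∀ x ∈ S, star x ∈ S)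
    (ψ : A →L[ℂ] ℂ) (hψ : IsState ψ) (hpeak : IsSPeaking S ψ) :
    IsPureState ψ ∧ HasUEP S ψ := by

  obtain ⟨s, hsS, hsa, hs1, hψs, hlt⟩ := hpeak
  have bound : ∀ φ : A →L[ℂ] ℂ, IsState φ → ‖φ s‖ ≤ 1 := by
    intro φ hφ
    calc ‖φ s‖ = ‖φ s‖ := rfl
      _ ≤ ‖φ‖ * ‖s‖ := φ.le_opNorm s
      _ = 1 := by rw [hφ.1, hs1, one_mul]
  constructor
  · refine ⟨hψ, ?_⟩
    intro φ₁ φ₂ t h1 h2 ht0 ht1 heq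
    have hsum : (1 : ℂ) = (t : ℂ) * φ₁ s + ((1 - t : ℝ) : ℂ) * φ₂ s := by
      have := congrArg (fun f : A →L[ℂ] ℂ => f s) heq
      simpa [hψs] using this
    have key : ∀ (φ φ' : A →L[ℂ] ℂ) (u : ℝ), IsState φ → IsState φ' → 0 < u → u < 1 →
        (1 : ℂ) = (u : ℂ) * φ s + ((1 - u : ℝ) : ℂ) * φ' s → φ = ψ := by
      intro φ φ' u hφ hφ' hu0 hu1 hseq
      by_contra h
      have h1lt : ‖φ s‖ < 1 := hlt φ hφ h
      have h2le : ‖φ' s‖ ≤ 1 := bound φ' hφ'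
      have habs : (1 : ℝ) ≤ u * ‖φ s‖ + (1 - u) * ‖φ' s‖ := by
        calc (1 : ℝ) = ‖(1 : ℂ)‖ := by simp
          _ = ‖(u : ℂ) * φ s + ((1 - u : ℝ) : ℂ) * φ' s‖ := by rw [← hseq]
          _ ≤ ‖(u : ℂ) * φ s‖ + ‖((1 - u : ℝ) : ℂ) * φ' s‖ :=
              norm_add_le _ _
          _ = u * ‖φ s‖ + (1 - u) * ‖φ' s‖ := by
              rw [norm_mul, norm_mul, Complex.norm_real, Complex.norm_real, Real.norm_eq_abs, Real.norm_eq_abs,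
                abs_of_pos hu0, abs_of_pos (by linarith)]
      nlinarith
    have e1 : φ₁ = ψ := key φ₁ φ₂ t h1 h2 ht0 ht1 hsum
    have e2 : φ₂ = ψ := by
      refine key φ₂ φ₁ (1 - t) h2 h1 (by linarith) (by linarith) ?_
      rw [hsum]
      push_cast
      ring
    exact ⟨e1, e2⟩
  · intro φ hφ hag
    by_contra h
    have := hlt φ hφ h
    rw [hag s hsS, hψs] at this
    simp at this
end

section
/- Let A be a unital C*-algebra and let S ⊂ A be an operator system. Let ψ be a state on A which is S-peaking, and let (σ_ψ, H_ψ, ξ_ψ) be a GNS triple for ψ. Then σ_ψ is an S-peaking representation: there exists s ∈ S such that ‖σ_ψ(s)‖ > ‖ρ(s)‖ for every unital *-representation ρ of A for which it is not the case that ‖σ_ψ(a)‖ ≤ ‖ρ(a)‖ for all a ∈ A. -/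
open scoped ComplexOrder

lemma aux_im_eq_zero {B : Type*} [CStarAlgebra B] [Nontrivial B]
    (g : B →L[ℂ] ℂ) (hg : ‖g‖ ≤ 1) (hg1 : g 1 = 1) {b : B} (hb : IsSelfAdjoint b) :
    (g b).im = 0 := by
  set x := (g b).re with hx
  set y := (g b).im with hy
  have key : ∀ t : ℝ, x ^ 2 + (y + t) ^ 2 ≤ ‖b‖ ^ 2 + t ^ 2 := by
    intro t
    set u : B := b + (((t : ℂ) * Complex.I) • 1) with hu
    have hsu : star u = b - ((t : ℂ) * Complex.I) • 1 := by
      simp [hu, hb.star_eq, star_smul, Complex.conj_I, sub_eq_add_neg, neg_smul]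
    have hmul : star u * u = b * b + ((t : ℝ) ^ 2 : ℂ) • 1 := by
      rw [hsu, hu]
      simp only [mul_add, add_mul, sub_mul, mul_sub, smul_mul_assoc, mul_smul_comm,
        one_mul, mul_one, smul_smul]
      have hI : ((t : ℂ) * Complex.I) * ((t : ℂ) * Complex.I) = -(((t : ℝ) ^ 2 : ℂ)) := by
        have := Complex.I_sq
        ring_nf
        rw [Complex.I_sq]
        ring
      rw [smul_sub, smul_smul, hI, neg_smul, sub_neg_eq_add]
      abel
    have hnu : ‖u‖ ^ 2 ≤ ‖b‖ ^ 2 + t ^ 2 := by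
      have h1 : ‖u‖ ^ 2 = ‖star u * u‖ := by
        rw [CStarRing.norm_star_mul_self, sq]
      rw [h1, hmul]
      calc ‖b * b + ((t : ℝ) ^ 2 : ℂ) • 1‖ ≤ ‖b * b‖ + ‖((t : ℝ) ^ 2 : ℂ) • (1 : B)‖ :=
            norm_add_le _ _
        _ ≤ ‖b‖ ^ 2 + t ^ 2 := by
            rw [norm_smul, norm_one, mul_one]
            have := norm_mul_le b b
            have h2 : ‖(((t : ℝ) ^ 2 : ℝ) : ℂ)‖ = t ^ 2 := by
              rw [Complex.norm_real, Real.norm_eq_abs, abs_of_nonneg (sq_nonneg t)]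
            push_cast at h2 ⊢
            rw [h2]
            nlinarith
    have hgu : g u = Complex.mk x (y + t) := by
      rw [hu, map_add, map_smul, hg1, smul_eq_mul, mul_one]
      apply Complex.ext <;> simp [hx, hy]
    have habs : ‖g u‖ ≤ ‖u‖ := by
      calc ‖g u‖ = ‖g u‖ := rfl
        _ ≤ ‖g‖ * ‖u‖ := g.le_opNorm u
        _ ≤ 1 * ‖u‖ := by gcongr
        _ = ‖u‖ := one_mul _
    have hsq : x ^ 2 + (y + t) ^ 2 = ‖g u‖ ^ 2 := by
      rw [hgu, Complex.sq_norm, Complex.normSq_mk]; ring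
    nlinarith [habs, norm_nonneg u, norm_nonneg (g u)]
  by_contra hy0
  have h2 : ∀ t : ℝ, 2 * y * t ≤ ‖b‖ ^ 2 - x ^ 2 - y ^ 2 := fun t => by nlinarith [key t]
  have := h2 ((‖b‖ ^ 2 - x ^ 2 - y ^ 2 + 1) / (2 * y))
  rw [mul_div_cancel₀ _ (by simpa using hy0 : (2 : ℝ) * y ≠ 0)] at this
  linarith

lemma aux_nonneg {B : Type*} [CStarAlgebra B] [PartialOrder B] [StarOrderedRing B] [Nontrivial B]
    (g : B →L[ℂ] ℂ) (hg : ‖g‖ ≤ 1) (hg1 : g 1 = 1) {a : B} (ha : 0 ≤ a) : 0 ≤ g a := by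
  have hsa : IsSelfAdjoint a := ha.isSelfAdjoint
  have him : (g a).im = 0 := aux_im_eq_zero g hg hg1 hsa
  rw [Complex.nonneg_iff]
  refine ⟨?_, him.symm⟩
  have h1 : a ≤ algebraMap ℝ B ‖a‖ := hsa.le_algebraMap_norm_self
  have h0b : 0 ≤ algebraMap ℝ B ‖a‖ - a := sub_nonneg.2 h1
  have hble : algebraMap ℝ B ‖a‖ - a ≤ algebraMap ℝ B ‖a‖ := sub_le_self _ ha
  have hnb : ‖algebraMap ℝ B ‖a‖ - a‖ ≤ ‖a‖ := by
    calc ‖algebraMap ℝ B ‖a‖ - a‖ ≤ ‖algebraMap ℝ B ‖a‖‖ :=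
          CStarAlgebra.norm_le_norm_of_nonneg_of_le h0b hble
      _ = ‖a‖ := by rw [norm_algebraMap', Real.norm_of_nonneg (norm_nonneg a)]
  have halg : algebraMap ℝ B ‖a‖ = ((‖a‖ : ℂ)) • (1 : B) := by
    rw [IsScalarTower.algebraMap_apply ℝ ℂ B, Algebra.algebraMap_eq_smul_one]
    norm_num [Complex.coe_algebraMap]
  have hgb : g (algebraMap ℝ B ‖a‖ - a) = (‖a‖ : ℂ) - g a := by
    rw [map_sub, halg, map_smul, smul_eq_mul, hg1, mul_one]
  have habs : ‖(‖a‖ : ℂ) - g a‖ ≤ ‖a‖ := by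
    rw [← hgb]
    calc ‖g _‖ = ‖g _‖ := rfl
      _ ≤ ‖g‖ * ‖algebraMap ℝ B ‖a‖ - a‖ := g.le_opNorm _
      _ ≤ 1 * ‖a‖ := mul_le_mul hg hnb (norm_nonneg _) zero_le_one
      _ = ‖a‖ := one_mul _
  have hga : g a = ((g a).re : ℂ) := by
    apply Complex.ext <;> simp [him]
  rw [hga] at habs
  rw [← Complex.ofReal_sub, Complex.norm_real, Real.norm_eq_abs] at habs
  have := abs_le.mp habs
  linarith [this.2]
open Filter Topology
open scoped ComplexOrder InnerProductSpace

set_option maxHeartbeats 1000000 in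
/-- if a state `ψ` is `S`-peaking, then its GNS representation `σ` is an
`S`-peaking representation: there is `s ∈ S` with `‖σ s‖ > ‖ρ s‖` for every unital
*-representation `ρ` of `A` such that `σ ⊀ ρ`, i.e. such that it is not the case that
`‖σ a‖ ≤ ‖ρ a‖` for all `a`. -/
theorem stmt3 {A : Type*} [CStarAlgebra A]
    (S : Submodule ℂ A) (hS1 : (1 : A) ∈ S) (hSstar : ∀ x ∈ S, star x ∈ S)
    (ψ : A →L[ℂ] ℂ) (hψ : IsState ψ) (hpeak : IsSPeaking S ψ)
    (Hψ : Type*) [NormedAddCommGroup Hψ] [InnerProductSpace ℂ Hψ] [CompleteSpace Hψ]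
    (σ : A →⋆ₐ[ℂ] (Hψ →L[ℂ] Hψ)) (ξ : Hψ) (hξ : ‖ξ‖ = 1)
    (hcyclic : Dense (Set.range fun a : A => σ a ξ))
    (hGNS : ∀ a : A, ψ a = ⟪ξ, σ a ξ⟫_ℂ) :
    ∃ s ∈ S, ∀ (K : Type*) [NormedAddCommGroup K] [InnerProductSpace ℂ K] [CompleteSpace K]
      (ρ : A →⋆ₐ[ℂ] (K →L[ℂ] K)),
      ¬ (∀ a : A, ‖σ a‖ ≤ ‖ρ a‖) → ‖ρ s‖ < ‖σ s‖ := by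
  obtain ⟨s, hsS, hsa, hs1, hψs, hpk⟩ := hpeak
  have hnorm_sq : ∀ c : A, ψ (star c * c) = ((‖σ c ξ‖ : ℂ)) ^ 2 := by
    intro c
    rw [hGNS, map_mul, map_star, ContinuousLinearMap.mul_apply,
      ContinuousLinearMap.star_eq_adjoint, ContinuousLinearMap.adjoint_inner_right,
      inner_self_eq_norm_sq_to_K]
    norm_cast
  refine ⟨s, hsS, ?_⟩
  intro K _ _ _ ρ hnot
  have hσs1 : ‖σ s‖ = 1 := by
    have hle : ‖σ s‖ ≤ 1 := by
      simpa [hs1] using NonUnitalStarAlgHom.norm_apply_le σ s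
    have hge : (1 : ℝ) ≤ ‖σ s‖ := by
      have h1 : ‖ψ s‖ ≤ ‖σ s‖ := by
        rw [hGNS]
        calc ‖⟪ξ, σ s ξ⟫_ℂ‖ ≤ ‖ξ‖ * ‖σ s ξ‖ := norm_inner_le_norm _ _
          _ ≤ ‖ξ‖ * (‖σ s‖ * ‖ξ‖) := by gcongr; exact (σ s).le_opNorm ξ
          _ = ‖σ s‖ := by rw [hξ]; ring
      rwa [hψs, norm_one] at h1
    linarith
  have hρle : ‖ρ s‖ ≤ 1 := by simpa [hs1] using NonUnitalStarAlgHom.norm_apply_le ρ s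
  rw [hσs1]
  rcases lt_or_eq_of_le hρle with hlt | heq
  · exact hlt
  exfalso
  apply hnot
  set B := K →L[ℂ] K with hBdef
  set t : B := ρ s with ht
  have hteq : ‖t‖ = 1 := heq
  have htsa : IsSelfAdjoint t := hsa.map ρ
  haveI : IsStarNormal t := htsa.isStarNormal
  haveI : Nontrivial B := by
    refine nontrivial_of_ne t 0 fun h0 => ?_
    rw [h0] at hteq; simp at hteq
  obtain ⟨z, hz, hznorm⟩ := spectrum.exists_nnnorm_eq_spectralRadius (a := t)
  have hzn : ‖z‖ = 1 := by
    rw [htsa.spectralRadius_eq_nnnorm] at hznorm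
    have h2 : ‖z‖₊ = ‖t‖₊ := by exact_mod_cast hznorm
    have h3 : ‖z‖ = ‖t‖ := congrArg NNReal.toReal h2
    rw [h3, hteq]
  set E := StarAlgebra.elemental ℂ t with hE
  have htE : t ∈ E := StarAlgebra.elemental.self_mem ℂ t
  haveI : IsClosed (E : Set B) := StarAlgebra.elemental.isClosed ℂ t
  have hzE : z ∈ spectrum ℂ (⟨t, htE⟩ : E) := by
    rw [StarSubalgebra.spectrum_eq (a := (⟨t, htE⟩ : E))]
    exact hz
  obtain ⟨ω, hω⟩ := WeakDual.CharacterSpace.mem_spectrum_iff_exists.mp hzE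
  haveI : Nontrivial E := ⟨⟨1, 0, fun h => one_ne_zero (congrArg Subtype.val h : (1 : B) = 0)⟩⟩
  have hωle : ∀ v : E, ‖ω v‖ ≤ ‖v‖ := fun v =>
    spectrum.norm_le_norm_of_mem (WeakDual.CharacterSpace.apply_mem_spectrum ω v)
  let p : Submodule ℂ B := Subalgebra.toSubmodule E.toSubalgebra
  have hmem : ∀ v : p, (v : B) ∈ E := fun v => v.2
  let f₀ : p →ₗ[ℂ] ℂ :=
    { toFun := fun v => ω (⟨v.1, hmem v⟩ : E)
      map_add' := fun v w => by rw [← map_add]; rfl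
      map_smul' := fun c v => by rw [← map_smul]; rfl }
  have hf₀ : ∀ v : p, ‖f₀ v‖ ≤ 1 * ‖v‖ := fun v => by
    rw [one_mul]; exact hωle _
  let f : p →L[ℂ] ℂ := f₀.mkContinuous 1 hf₀
  obtain ⟨g, hgext, hgnorm⟩ := exists_extension_norm_eq p f
  have hgle : ‖g‖ ≤ 1 := by
    rw [hgnorm]; exact f₀.mkContinuous_norm_le zero_le_one hf₀
  have h1p : (1 : B) ∈ p := one_mem E.toSubalgebra
  have hg1 : g 1 = 1 := by
    have h := hgext ⟨1, h1p⟩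
    have h2 : g 1 = f ⟨1, h1p⟩ := h
    rw [h2]
    show ω (⟨(1 : B), _⟩ : E) = 1
    rw [show (⟨(1 : B), hmem ⟨1, h1p⟩⟩ : E) = 1 from Subtype.ext rfl, map_one]
  have htp : t ∈ p := htE
  have hgt : g t = z := by
    have h2 : g t = f ⟨t, htp⟩ := hgext ⟨t, htp⟩
    rw [h2]
    show ω (⟨t, _⟩ : E) = z
    exact hω
  have hgpos : ∀ v : B, 0 ≤ v → 0 ≤ g v := fun v hv => aux_nonneg g hgle hg1 hv
  have hρb : ∀ a : A, ‖ρ a‖ ≤ ‖a‖ := fun a => NonUnitalStarAlgHom.norm_apply_le ρ a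
  let ρL : A →L[ℂ] B := LinearMap.mkContinuous ρ.toAlgHom.toLinearMap 1
    (fun a => by simpa using hρb a)
  let φ : A →L[ℂ] ℂ := g.comp ρL
  have hφapp : ∀ a : A, φ a = g (ρ a) := fun a => rfl
  haveI : Nontrivial A := by
    refine nontrivial_of_ne s 0 fun h0 => ?_
    rw [h0] at hs1; simp at hs1
  have hφ1 : φ 1 = 1 := by rw [hφapp, map_one ρ]; exact hg1
  have hφstate : IsState φ := by
    refine ⟨le_antisymm ?_ ?_, fun a => ?_⟩
    · calc ‖φ‖ ≤ ‖g‖ * ‖ρL‖ := ContinuousLinearMap.opNorm_comp_le _ _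
        _ ≤ 1 * 1 := by
            have := LinearMap.mkContinuous_norm_le ρ.toAlgHom.toLinearMap zero_le_one
              (fun a => by simpa using hρb a)
            exact mul_le_mul hgle this (norm_nonneg _) zero_le_one
        _ = 1 := one_mul 1
    · calc (1 : ℝ) = ‖φ 1‖ := by rw [hφ1]; simp
        _ ≤ ‖φ‖ * ‖(1 : A)‖ := φ.le_opNorm 1
        _ = ‖φ‖ := by rw [norm_one, mul_one]
    · rw [hφapp, map_mul, map_star]
      exact hgpos _ (star_mul_self_nonneg _)
  have hφψ : φ = ψ := by
    by_contra hne
    have hcon := hpk φ hφstate hne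
    rw [hφapp] at hcon
    have habs : ‖z‖ < 1 := by rwa [show g (ρ s) = z from hgt] at hcon
    rw [hzn] at habs
    exact lt_irrefl 1 habs
  have hψφ : ∀ c : A, ψ c = g (ρ c) := fun c => by rw [← hφψ]; rfl
  intro a
  have key : ∀ b : A, ‖σ a (σ b ξ)‖ ≤ ‖ρ a‖ * ‖σ b ξ‖ := by
    intro b
    have hB : star (ρ (a * b)) * (ρ (a * b)) ≤ (‖ρ a‖ ^ 2 : ℝ) • (star (ρ b) * ρ b) := by
      have h2 : star (ρ a) * ρ a ≤ algebraMap ℝ B (‖ρ a‖ ^ 2) :=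
        CStarAlgebra.star_mul_le_algebraMap_norm_sq
      have h3 := star_left_conjugate_le_conjugate h2 (ρ b)
      calc star (ρ (a * b)) * ρ (a * b)
          = star (ρ b) * (star (ρ a) * ρ a) * ρ b := by
            rw [map_mul, star_mul]; noncomm_ring
        _ ≤ star (ρ b) * algebraMap ℝ B (‖ρ a‖ ^ 2) * ρ b := h3
        _ = (‖ρ a‖ ^ 2 : ℝ) • (star (ρ b) * ρ b) := by
            rw [Algebra.algebraMap_eq_smul_one, mul_smul_comm, smul_mul_assoc, mul_one]
    have hg2 := hgpos _ (sub_nonneg.2 hB)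
    rw [map_sub, ← algebraMap_smul ℂ (‖ρ a‖ ^ 2 : ℝ), map_smul] at hg2
    have e1 : g (star (ρ (a * b)) * ρ (a * b)) = ((‖σ (a * b) ξ‖ : ℂ)) ^ 2 := by
      rw [← map_star ρ, ← map_mul ρ, ← hψφ, hnorm_sq]
    have e2 : g (star (ρ b) * ρ b) = ((‖σ b ξ‖ : ℂ)) ^ 2 := by
      rw [← map_star ρ, ← map_mul ρ, ← hψφ, hnorm_sq]
    rw [e1, e2] at hg2
    have hcast : ((‖ρ a‖ ^ 2 * ‖σ b ξ‖ ^ 2 - ‖σ (a * b) ξ‖ ^ 2 : ℝ) : ℂ)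
        = algebraMap ℝ ℂ (‖ρ a‖ ^ 2) • ((‖σ b ξ‖ : ℂ)) ^ 2 - ((‖σ (a * b) ξ‖ : ℂ)) ^ 2 := by
      rw [Complex.coe_algebraMap, smul_eq_mul]
      push_cast
      ring
    rw [← hcast] at hg2
    have hreal := Complex.zero_le_real.mp hg2
    have hab : σ (a * b) ξ = σ a (σ b ξ) := by rw [map_mul, ContinuousLinearMap.mul_apply]
    rw [hab] at hreal
    nlinarith [norm_nonneg (σ a (σ b ξ)), mul_nonneg (norm_nonneg (ρ a)) (norm_nonneg (σ b ξ)),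
      norm_nonneg (σ b ξ), norm_nonneg (ρ a)]
  have hclosed : IsClosed {v : Hψ | ‖σ a v‖ ≤ ‖ρ a‖ * ‖v‖} :=
    isClosed_le (continuous_norm.comp (σ a).continuous) (continuous_const.mul continuous_norm)
  refine (σ a).opNorm_le_bound (norm_nonneg _) fun v => ?_
  exact hclosed.closure_subset_iff.mpr (by rintro _ ⟨b, rfl⟩; exact key b) (hcyclic v)
end

section
/- Let A be a unital C*-algebra and let φ, ψ be states on A. Assume that (Δ_n) is a characteristic sequence for ψ and that lim_{n→∞} |φ(Δ_n)| = 1. Then φ(a) = lim_{n→∞} φ(Δ_n* a Δ_n) for every a ∈ A, and φ = ψ. -/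
open Filter Topology
open scoped ComplexOrder

/-- A characteristic sequence for a state `ψ`: a sequence of norm-one elements with
`ψ (Δ n) → 1` and `limsup ‖Δ n⋆ * a * Δ n‖ ≤ |ψ a|` for every `a`. -/
def IsCharacteristicSequence {A : Type*} [CStarAlgebra A] (ψ : A →L[ℂ] ℂ) (Δ : ℕ → A) : Prop :=
  (∀ n, ‖Δ n‖ = 1) ∧ Tendsto (fun n => ψ (Δ n)) atTop (nhds 1) ∧
    ∀ a : A, limsup (fun n => ‖star (Δ n) * a * Δ n‖) atTop ≤ ‖ψ a‖

section Aux
variable {A : Type*} [CStarAlgebra A] {φ : A →L[ℂ] ℂ}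

lemma herm (hpos : ∀ a : A, 0 ≤ φ (star a * a)) (x y : A) :
    (starRingEnd ℂ) (φ (star y * x)) = φ (star x * y) := by
  have him : ∀ z : A, (φ (star z * z)).im = 0 := fun z =>
    ((Complex.nonneg_iff.mp (hpos z)).2).symm
  have h1 : (φ (star x * y)).im + (φ (star y * x)).im = 0 := by
    have h := him (x + y)
    simp only [star_add, add_mul, mul_add, map_add, Complex.add_im, him x, him y] at h
    linarith
  have h2 : (φ (star x * y)).re = (φ (star y * x)).re := by
    have h := him (x + Complex.I • y)
    have e1 : star (x + Complex.I • y) * (x + Complex.I • y)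
        = star x * x + Complex.I • (star x * y)
          + (starRingEnd ℂ) Complex.I • (star y * x)
          + (Complex.I * (starRingEnd ℂ) Complex.I) • (star y * y) := by
      simp only [star_add, star_smul, add_mul, mul_add, smul_mul_assoc, mul_smul_comm,
        starRingEnd_apply, smul_smul, smul_add]
      abel
    rw [e1] at h
    simp only [map_add, map_smul, smul_eq_mul, Complex.add_im, Complex.mul_im,
      Complex.conj_re, Complex.conj_im, Complex.I_re, Complex.I_im, him x, him y,
      Complex.conj_I, Complex.mul_re, Complex.neg_re, Complex.neg_im, Complex.one_im,
      Complex.one_re, mul_neg, Complex.I_mul_I, neg_neg, one_mul] at h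
    linarith
  apply Complex.ext
  · simp only [Complex.conj_re]; linarith
  · simp only [Complex.conj_im]; linarith

/-- Sesquilinear positive form coming from a positive functional. -/
noncomputable def coreOf (hpos : ∀ a : A, 0 ≤ φ (star a * a)) :
    PreInnerProductSpace.Core ℂ A where
  inner x y := φ (star x * y)
  conj_inner_symm x y := herm hpos x y
  re_inner_nonneg x := (Complex.nonneg_iff.mp (hpos x)).1
  add_left x y z := by simp [star_add, add_mul]
  smul_left x y r := by
    show φ (star (r • x) * y) = (starRingEnd ℂ) r * φ (star x * y)
    rw [star_smul, smul_mul_assoc, map_smul, smul_eq_mul, starRingEnd_apply]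

/-- Cauchy–Schwarz inequality for a positive functional. -/
lemma cs (hpos : ∀ a : A, 0 ≤ φ (star a * a)) (x y : A) :
    ‖φ (star x * y)‖ ^ 2 ≤ (φ (star x * x)).re * (φ (star y * y)).re := by
  have h := InnerProductSpace.Core.inner_mul_inner_self_le (𝕜 := ℂ) (c := coreOf hpos) x y
  have e1 : @inner ℂ A (InnerProductSpace.Core.toPreInner' (c := coreOf hpos)) x y
      = φ (star x * y) := rfl
  have e2 : @inner ℂ A (InnerProductSpace.Core.toPreInner' (c := coreOf hpos)) y x
      = φ (star y * x) := rfl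
  have e3 : @inner ℂ A (InnerProductSpace.Core.toPreInner' (c := coreOf hpos)) x x
      = φ (star x * x) := rfl
  have e4 : @inner ℂ A (InnerProductSpace.Core.toPreInner' (c := coreOf hpos)) y y
      = φ (star y * y) := rfl
  rw [e1, e2, e3, e4] at h
  have hnorm : ‖φ (star y * x)‖ = ‖φ (star x * y)‖ := by
    rw [← herm hpos x y]; exact (RCLike.norm_conj _).symm
  rw [hnorm] at h
  simpa [sq, RCLike.re_to_complex] using h

lemma abs_le_norm (hn : ‖φ‖ = 1) (z : A) : ‖φ z‖ ≤ ‖z‖ := by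
  simpa [hn] using φ.le_opNorm z

lemma state_one [Nontrivial A] (hn : ‖φ‖ = 1) (hpos : ∀ a : A, 0 ≤ φ (star a * a))
    {Δ : ℕ → A} (hΔ1 : ∀ n, ‖Δ n‖ = 1)
    (h : Tendsto (fun n => ‖φ (Δ n)‖) atTop (nhds 1)) : φ 1 = 1 := by
  have hpos1 : 0 ≤ φ 1 := by have := hpos 1; rwa [star_one, one_mul] at this
  have h1 : ∀ n, ‖φ (Δ n)‖ ^ 2 ≤ (φ 1).re := by
    intro n
    have hc := cs hpos 1 (Δ n)
    simp only [star_one, one_mul] at hc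
    have hr : (φ (star (Δ n) * Δ n)).re ≤ 1 := by
      calc (φ (star (Δ n) * Δ n)).re ≤ ‖φ (star (Δ n) * Δ n)‖ :=
            Complex.re_le_norm _
        _ ≤ ‖star (Δ n) * Δ n‖ := abs_le_norm hn _
        _ = 1 := by rw [CStarRing.norm_star_mul_self, hΔ1 n, one_mul]
    have h0 : 0 ≤ (φ 1).re := (Complex.nonneg_iff.mp hpos1).1
    nlinarith
  have hge : (1:ℝ) ≤ (φ 1).re := by
    have h2 : Tendsto (fun n => ‖φ (Δ n)‖ ^ 2) atTop (nhds 1) := by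
      simpa using h.pow 2
    exact le_of_tendsto h2 (Filter.Eventually.of_forall h1)
  have hle : (φ 1).re ≤ 1 := by
    calc (φ 1).re ≤ ‖φ 1‖ := Complex.re_le_norm _
      _ ≤ ‖(1:A)‖ := abs_le_norm hn _
      _ = 1 := norm_one
  have him : (φ 1).im = 0 := ((Complex.nonneg_iff.mp hpos1).2).symm
  apply Complex.ext <;> simp [him]; linarith

end Aux

/-- if `(Δ n)` is a characteristic sequence for `ψ` and `|φ (Δ n)| → 1`, then
`φ (Δ n⋆ * a * Δ n) → φ a` for every `a`, and `φ = ψ`. -/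
theorem stmt4 {A : Type*} [CStarAlgebra A]
    (φ ψ : A →L[ℂ] ℂ) (hφ : IsState φ) (hψ : IsState ψ)
    (Δ : ℕ → A) (hΔ : IsCharacteristicSequence ψ Δ)
    (habs : Tendsto (fun n => ‖φ (Δ n)‖) atTop (nhds 1)) :
    (∀ a : A, Tendsto (fun n => φ (star (Δ n) * a * Δ n)) atTop (nhds (φ a))) ∧ φ = ψ := by
  obtain ⟨hφn, hφp⟩ := hφ
  obtain ⟨hψn, hψp⟩ := hψ
  obtain ⟨hΔ1, hΔ2, hΔ3⟩ := hΔ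
  haveI : Nontrivial A := by
    by_contra h
    rw [not_nontrivial_iff_subsingleton] at h
    have h0 : φ = 0 := by ext a; rw [Subsingleton.elim a 0]; simp
    rw [h0, norm_zero] at hφn; exact one_ne_zero hφn.symm
  have hφ1 : φ 1 = 1 := state_one hφn hφp hΔ1 habs
  have hψabs : Tendsto (fun n => ‖ψ (Δ n)‖) atTop (nhds 1) := by
    have h := (continuous_norm.tendsto 1).comp hΔ2
    rwa [norm_one] at h
  have hψ1 : ψ 1 = 1 := state_one hψn hψp hΔ1 hψabs
  set lam : ℕ → ℂ := fun n => φ (Δ n) with hlam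
  set r : ℕ → ℝ := fun n => (φ (star (Δ n) * Δ n)).re with hrdef
  have hlam_le : ∀ n, ‖lam n‖ ≤ 1 := fun n => by
    simpa [hΔ1 n] using abs_le_norm hφn (Δ n)
  have hr_le : ∀ n, r n ≤ 1 := fun n => by
    calc r n ≤ ‖φ (star (Δ n) * Δ n)‖ := Complex.re_le_norm _
      _ ≤ ‖star (Δ n) * Δ n‖ := abs_le_norm hφn _
      _ = 1 := by rw [CStarRing.norm_star_mul_self, hΔ1 n, one_mul]
  have hcs0 : ∀ n, ‖lam n‖ ^ 2 ≤ r n := fun n => by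
    have hc := cs hφp 1 (Δ n)
    simp only [star_one, one_mul, hφ1, Complex.one_re] at hc
    simpa using hc
  have habs2 : Tendsto (fun n => ‖lam n‖ ^ 2) atTop (nhds 1) := by
    simpa using habs.pow 2
  have hrlim : Tendsto r atTop (nhds 1) :=
    tendsto_of_tendsto_of_tendsto_of_le_of_le habs2 tendsto_const_nhds hcs0 hr_le
  set E : ℕ → ℝ := fun n => r n - ‖lam n‖ ^ 2 with hEdef
  have hE0 : ∀ n, 0 ≤ E n := fun n => sub_nonneg.2 (hcs0 n)
  have hElim : Tendsto E atTop (nhds 0) := by simpa using hrlim.sub habs2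
  have hstar : ∀ z : A, φ (star z) = (starRingEnd ℂ) (φ z) := fun z => by
    have h := herm hφp z 1
    simpa using h.symm
  set X : ℕ → A := fun n => Δ n - lam n • 1 with hXdef
  have hxx : ∀ n, (φ (star (X n) * X n)).re = E n := by
    intro n
    have expand : star (X n) * X n = star (Δ n) * Δ n - lam n • star (Δ n)
        - (starRingEnd ℂ) (lam n) • Δ n + (lam n * (starRingEnd ℂ) (lam n)) • (1:A) := by
      simp only [hXdef, star_sub, star_smul, star_one, sub_mul, mul_sub, smul_sub, smul_add,
        smul_mul_assoc, mul_smul_comm, smul_smul, mul_one, one_mul, starRingEnd_apply]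
      abel
    rw [expand]
    have hsq : (‖lam n‖) ^ 2 = (lam n).re ^ 2 + (lam n).im ^ 2 := by
      rw [← Complex.normSq_eq_norm_sq, Complex.normSq_apply]; ring
    simp only [map_add, map_sub, map_smul, smul_eq_mul, hstar, hφ1, mul_one,
      Complex.sub_re, Complex.add_re, Complex.mul_re, Complex.conj_re, Complex.conj_im]
    simp only [hEdef, hrdef, hsq]
    ring
  have part1 : ∀ a : A, Tendsto (fun n => φ (star (Δ n) * a * Δ n)) atTop (nhds (φ a)) := by
    intro a
    have key : ∀ n, ‖φ (star (Δ n) * a * Δ n)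
        - ((‖lam n‖ ^ 2 : ℝ) : ℂ) * φ a‖ ≤ 2 * ‖a‖ * Real.sqrt (E n) := by
      intro n
      have decomp : star (Δ n) * a * Δ n
          = star (X n) * (a * Δ n) + (starRingEnd ℂ) (lam n) • (a * X n)
            + ((starRingEnd ℂ) (lam n) * lam n) • a := by
        simp only [hXdef, star_sub, star_smul, star_one, sub_mul, mul_sub, smul_sub, smul_add,
          smul_mul_assoc, mul_smul_comm, smul_smul, mul_one, one_mul, mul_assoc, starRingEnd_apply]
        abel
      have hnormsq : ((‖lam n‖ ^ 2 : ℝ) : ℂ) = (starRingEnd ℂ) (lam n) * lam n := by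
        rw [← Complex.normSq_eq_norm_sq, ← Complex.mul_conj]; push_cast; ring
      have hrw : φ (star (Δ n) * a * Δ n) - ((‖lam n‖ ^ 2 : ℝ) : ℂ) * φ a
          = φ (star (X n) * (a * Δ n)) + (starRingEnd ℂ) (lam n) * φ (a * X n) := by
        rw [decomp, hnormsq]
        simp only [map_add, map_smul, smul_eq_mul]
        ring
      have t1 : ‖φ (star (X n) * (a * Δ n))‖ ≤ Real.sqrt (E n) * ‖a‖ := by
        have hc := cs hφp (X n) (a * Δ n)
        rw [hxx n] at hc
        have h2 : (φ (star (a * Δ n) * (a * Δ n))).re ≤ ‖a‖ ^ 2 := by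
          calc (φ (star (a * Δ n) * (a * Δ n))).re
              ≤ ‖φ (star (a * Δ n) * (a * Δ n))‖ := Complex.re_le_norm _
            _ ≤ ‖star (a * Δ n) * (a * Δ n)‖ := abs_le_norm hφn _
            _ = ‖a * Δ n‖ ^ 2 := by rw [CStarRing.norm_star_mul_self]; ring
            _ ≤ ‖a‖ ^ 2 := by
                have h3 := norm_mul_le a (Δ n)
                rw [hΔ1 n, mul_one] at h3
                exact pow_le_pow_left₀ (norm_nonneg _) h3 2
        have hle2 : ‖φ (star (X n) * (a * Δ n))‖ ^ 2
            ≤ (Real.sqrt (E n) * ‖a‖) ^ 2 := by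
          calc ‖φ (star (X n) * (a * Δ n))‖ ^ 2
              ≤ E n * (φ (star (a * Δ n) * (a * Δ n))).re := hc
            _ ≤ E n * ‖a‖ ^ 2 := mul_le_mul_of_nonneg_left h2 (hE0 n)
            _ = (Real.sqrt (E n) * ‖a‖) ^ 2 := by
                rw [mul_pow, Real.sq_sqrt (hE0 n)]
        calc ‖φ (star (X n) * (a * Δ n))‖
            = Real.sqrt (‖φ (star (X n) * (a * Δ n))‖ ^ 2) :=
              (Real.sqrt_sq (norm_nonneg _)).symm
          _ ≤ Real.sqrt ((Real.sqrt (E n) * ‖a‖) ^ 2) := Real.sqrt_le_sqrt hle2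
          _ = Real.sqrt (E n) * ‖a‖ :=
              Real.sqrt_sq (mul_nonneg (Real.sqrt_nonneg _) (norm_nonneg _))
      have t2 : ‖φ (a * X n)‖ ≤ ‖a‖ * Real.sqrt (E n) := by
        have hc := cs hφp (star a) (X n)
        rw [star_star, hxx n] at hc
        have h2 : (φ (a * star a)).re ≤ ‖a‖ ^ 2 := by
          calc (φ (a * star a)).re
              ≤ ‖φ (a * star a)‖ := Complex.re_le_norm _
            _ ≤ ‖a * star a‖ := abs_le_norm hφn _
            _ = ‖a‖ ^ 2 := by rw [CStarRing.norm_self_mul_star]; ring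
        have hle2 : ‖φ (a * X n)‖ ^ 2 ≤ (‖a‖ * Real.sqrt (E n)) ^ 2 := by
          calc ‖φ (a * X n)‖ ^ 2
              ≤ (φ (a * star a)).re * E n := hc
            _ ≤ ‖a‖ ^ 2 * E n := mul_le_mul_of_nonneg_right h2 (hE0 n)
            _ = (‖a‖ * Real.sqrt (E n)) ^ 2 := by
                rw [mul_pow, Real.sq_sqrt (hE0 n)]
        calc ‖φ (a * X n)‖
            = Real.sqrt (‖φ (a * X n)‖ ^ 2) :=
              (Real.sqrt_sq (norm_nonneg _)).symm
          _ ≤ Real.sqrt ((‖a‖ * Real.sqrt (E n)) ^ 2) := Real.sqrt_le_sqrt hle2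
          _ = ‖a‖ * Real.sqrt (E n) :=
              Real.sqrt_sq (mul_nonneg (norm_nonneg _) (Real.sqrt_nonneg _))
      rw [hrw]
      calc ‖φ (star (X n) * (a * Δ n)) + (starRingEnd ℂ) (lam n) * φ (a * X n)‖
          ≤ ‖φ (star (X n) * (a * Δ n))‖
            + ‖(starRingEnd ℂ) (lam n) * φ (a * X n)‖ := norm_add_le _ _
        _ = ‖φ (star (X n) * (a * Δ n))‖
            + ‖lam n‖ * ‖φ (a * X n)‖ := by
            rw [norm_mul, RCLike.norm_conj]
        _ ≤ Real.sqrt (E n) * ‖a‖ + 1 * (‖a‖ * Real.sqrt (E n)) := by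
            refine add_le_add t1 ?_
            exact mul_le_mul (hlam_le n) t2 (norm_nonneg _) zero_le_one
        _ = 2 * ‖a‖ * Real.sqrt (E n) := by ring
    have h0 : Tendsto (fun n => φ (star (Δ n) * a * Δ n)
        - ((‖lam n‖ ^ 2 : ℝ) : ℂ) * φ a) atTop (nhds 0) := by
      rw [tendsto_zero_iff_norm_tendsto_zero]
      have hub : Tendsto (fun n => 2 * ‖a‖ * Real.sqrt (E n)) atTop (nhds 0) := by
        have hs := (Real.continuous_sqrt.tendsto 0).comp hElim
        simpa using hs.const_mul (2 * ‖a‖)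
      refine squeeze_zero (fun n => norm_nonneg _) (fun n => ?_) hub
      simpa using key n
    have h1 : Tendsto (fun n => ((‖lam n‖ ^ 2 : ℝ) : ℂ) * φ a) atTop
        (nhds ((1:ℂ) * φ a)) := by
      have hcast : Tendsto (fun n => ((‖lam n‖ ^ 2 : ℝ) : ℂ)) atTop
          (nhds (((1:ℝ):ℂ))) := (Complex.continuous_ofReal.tendsto _).comp habs2
      exact hcast.mul tendsto_const_nhds
    have hsum := h0.add h1
    have heq : (fun n => (φ (star (Δ n) * a * Δ n)
        - ((‖lam n‖ ^ 2 : ℝ) : ℂ) * φ a)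
        + ((‖lam n‖ ^ 2 : ℝ) : ℂ) * φ a)
        = fun n => φ (star (Δ n) * a * Δ n) := by
      funext n; ring
    rw [heq] at hsum
    simpa using hsum
  have hle : ∀ b : A, ‖φ b‖ ≤ ‖ψ b‖ := by
    intro b
    have ht : Tendsto (fun n => ‖φ (star (Δ n) * b * Δ n)‖) atTop
        (nhds (‖φ b‖)) := (continuous_norm.tendsto _).comp (part1 b)
    have h1 : ‖φ b‖
        = limsup (fun n => ‖φ (star (Δ n) * b * Δ n)‖) atTop := ht.limsup_eq.symm
    have hbd : ∀ n, ‖star (Δ n) * b * Δ n‖ ≤ ‖b‖ := by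
      intro n
      calc ‖star (Δ n) * b * Δ n‖ ≤ ‖star (Δ n) * b‖ * ‖Δ n‖ := norm_mul_le _ _
        _ ≤ ‖star (Δ n)‖ * ‖b‖ * ‖Δ n‖ := by
            gcongr
            exact norm_mul_le _ _
        _ = ‖b‖ := by rw [norm_star, hΔ1 n]; ring
    have h2 : limsup (fun n => ‖φ (star (Δ n) * b * Δ n)‖) atTop
        ≤ limsup (fun n => ‖star (Δ n) * b * Δ n‖) atTop := by
      refine limsup_le_limsup (Filter.Eventually.of_forall fun n => abs_le_norm hφn _)
        ht.isCoboundedUnder_le ?_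
      exact Filter.isBoundedUnder_of ⟨‖b‖, hbd⟩
    rw [h1]
    exact h2.trans (hΔ3 b)
  refine ⟨part1, ?_⟩
  ext a
  have hb := hle (a - ψ a • 1)
  have hz : ψ (a - ψ a • 1) = 0 := by
    simp [hψ1]
  rw [hz, norm_zero] at hb
  have h0 : φ (a - ψ a • 1) = 0 := by
    have := le_antisymm hb (norm_nonneg _)
    exact norm_eq_zero.mp this
  have : φ a - ψ a * φ 1 = 0 := by
    simpa [map_sub, map_smul, smul_eq_mul] using h0
  rw [hφ1, mul_one] at this
  simpa [sub_eq_zero] using this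
end

section
/- Let A be a unital C*-algebra, let ψ be a state on A, and let (Δ_n) be a characteristic sequence for ψ. Then lim_{n→∞} ‖Δ_n* a Δ_n‖ = |ψ(a)| for every a ∈ A. -/
open Filter Topology
open scoped ComplexOrder

section Aux

variable {A : Type*} [CStarAlgebra A] {ψ : A →L[ℂ] ℂ}

lemma aux_nonneg_s5 (hψ : IsState ψ) (a : A) : 0 ≤ (ψ (star a * a)).re ∧ (ψ (star a * a)).im = 0 := by
  have := hψ.2 a
  rw [Complex.le_def] at this
  exact ⟨by simpa using this.1, by simpa using this.2.symm⟩

lemma aux_sa_im (hψ : IsState ψ) {a : A} (ha : IsSelfAdjoint a) : (ψ a).im = 0 := by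
  have h4 : star (1 + a) * (1 + a) - star (1 - a) * (1 - a) = (4 : ℕ) • a := by
    rw [star_add, star_sub, star_one, ha.star_eq]
    noncomm_ring
  have hψ4 : ψ (star (1 + a) * (1 + a)) - ψ (star (1 - a) * (1 - a)) = (4 : ℕ) • ψ a := by
    rw [← map_sub, h4, map_nsmul]
  have h1 := (aux_nonneg_s5 hψ (1 + a)).2
  have h2 := (aux_nonneg_s5 hψ (1 - a)).2
  have him : ((4 : ℕ) • ψ a).im = 0 := by
    rw [← hψ4, Complex.sub_im, h1, h2, sub_zero]
  have : (4 : ℝ) * (ψ a).im = 0 := by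
    simpa [Complex.smul_im] using him
  linarith

lemma aux_herm (hψ : IsState ψ) (a : A) : ψ (star a) = starRingEnd ℂ (ψ a) := by
  obtain ⟨h, k, hsh, hsk, hadd, hsub⟩ : ∃ h k : A, IsSelfAdjoint h ∧ IsSelfAdjoint k ∧
      h + Complex.I • k = a ∧ h - Complex.I • k = star a := by
    refine ⟨(2⁻¹ : ℂ) • (a + star a), (-(Complex.I / 2)) • (a - star a), ?_, ?_, ?_, ?_⟩
    · rw [IsSelfAdjoint, star_smul, star_add, star_star]
      have : star (2⁻¹ : ℂ) = (2⁻¹ : ℂ) := by simp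
      rw [this, add_comm]
    · rw [IsSelfAdjoint, star_smul, star_sub, star_star]
      have : star (-(Complex.I / 2)) = Complex.I / 2 := by
        simp [Complex.ext_iff]; norm_num
      rw [this, ← neg_sub a (star a), smul_neg, ← neg_smul]
    · rw [smul_smul,
        show Complex.I * -(Complex.I / 2) = (2⁻¹ : ℂ) by
          norm_num [Complex.ext_iff], ← smul_add,
        show a + star a + (a - star a) = (2 : ℂ) • a by rw [two_smul]; abel,
        smul_smul]
      norm_num
    · rw [smul_smul,
        show Complex.I * -(Complex.I / 2) = (2⁻¹ : ℂ) by
          norm_num [Complex.ext_iff], ← smul_sub,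
        show a + star a - (a - star a) = (2 : ℂ) • star a by rw [two_smul]; abel,
        smul_smul]
      norm_num
  have hih := aux_sa_im hψ hsh
  have hik := aux_sa_im hψ hsk
  rw [← hsub, ← hadd, map_sub, map_add, map_smul]
  simp only [smul_eq_mul, Complex.ext_iff, Complex.sub_re, Complex.sub_im, Complex.add_re, Complex.add_im,
    Complex.mul_re, Complex.mul_im, Complex.I_re, Complex.I_im, Complex.conj_re, Complex.conj_im,
    hih, hik]
  constructor <;> ring

lemma aux_cs (hψ : IsState ψ) (x y : A) :
    ‖ψ (star x * y)‖ ^ 2 ≤ (ψ (star x * x)).re * (ψ (star y * y)).re := by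
  letI core : PreInnerProductSpace.Core ℂ A :=
    { inner := fun x y => ψ (star x * y)
      conj_inner_symm := fun x y => by
        show starRingEnd ℂ (ψ (star y * x)) = ψ (star x * y)
        rw [← aux_herm hψ, star_mul, star_star]
      re_inner_nonneg := fun x => (aux_nonneg_s5 hψ x).1
      add_left := fun x y z => by simp only [star_add, add_mul, map_add]
      smul_left := fun x y r => by
        simp only [star_smul, smul_mul_assoc, map_smul, smul_eq_mul]
        rfl }
  have key := @InnerProductSpace.Core.inner_mul_inner_self_le ℂ A _ _ _ core x y
  have key' : ‖ψ (star x * y)‖ * ‖ψ (star y * x)‖ ≤ (ψ (star x * x)).re * (ψ (star y * y)).re :=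
    key
  have hyx : ψ (star y * x) = starRingEnd ℂ (ψ (star x * y)) := by
    rw [← aux_herm hψ, star_mul, star_star]
  rw [hyx] at key'
  simpa [sq] using key'

end Aux

section Aux2

variable {A : Type*} [CStarAlgebra A] {ψ : A →L[ℂ] ℂ}

lemma aux_cs' (hψ : IsState ψ) (x y : A) :
    ‖ψ (star x * y)‖ ≤
      Real.sqrt ((ψ (star x * x)).re) * Real.sqrt ((ψ (star y * y)).re) := by
  have h := aux_cs hψ x y
  calc ‖ψ (star x * y)‖
      = Real.sqrt (‖ψ (star x * y)‖ ^ 2) := by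
        rw [Real.sqrt_sq (norm_nonneg _)]
    _ ≤ Real.sqrt ((ψ (star x * x)).re * (ψ (star y * y)).re) := Real.sqrt_le_sqrt h
    _ = _ := Real.sqrt_mul (aux_nonneg_s5 hψ x).1 _

lemma aux_abs_le (hψ : IsState ψ) (b : A) : ‖ψ b‖ ≤ ‖b‖ := by
  have := ψ.le_opNorm b
  rw [hψ.1, one_mul] at this
  simpa using this

lemma aux_sqrt_le (hψ : IsState ψ) (x : A) {c : ℝ} (hc : 0 ≤ c) (hx : ‖x‖ ≤ c) :
    Real.sqrt ((ψ (star x * x)).re) ≤ c := by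
  have h1 : (ψ (star x * x)).re ≤ c * c := by
    calc (ψ (star x * x)).re ≤ ‖ψ (star x * x)‖ := Complex.re_le_norm _
      _ ≤ ‖star x * x‖ := aux_abs_le hψ _
      _ = ‖x‖ * ‖x‖ := CStarRing.norm_star_mul_self
      _ ≤ c * c := mul_le_mul hx hx (norm_nonneg _) hc
  calc Real.sqrt ((ψ (star x * x)).re) ≤ Real.sqrt (c * c) := Real.sqrt_le_sqrt h1
    _ = c := Real.sqrt_mul_self hc

end Aux2


/-- if `(Δ n)` is a characteristic sequence for the state `ψ`, then
`‖Δ n⋆ * a * Δ n‖ → |ψ a|` for every `a`. -/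
theorem stmt5 {A : Type*} [CStarAlgebra A]
    (ψ : A →L[ℂ] ℂ) (hψ : IsState ψ) (Δ : ℕ → A) (hΔ : IsCharacteristicSequence ψ Δ) :
    ∀ a : A, Tendsto (fun n => ‖star (Δ n) * a * Δ n‖) atTop (nhds (‖ψ a‖)) := by
  intro a
  obtain ⟨hnorm, htend, hsup⟩ := hΔ
  haveI hA : Nontrivial A := by
    refine ⟨⟨Δ 0, 0, fun h => ?_⟩⟩
    have := hnorm 0
    rw [h, norm_zero] at this
    norm_num at this
  -- the "error" sequence e
  set e : ℕ → ℝ := fun n => (ψ (star (Δ n - 1) * (Δ n - 1))).re with he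
  have he0 : ∀ n, 0 ≤ e n := fun n => (aux_nonneg_s5 hψ _).1
  have heup : ∀ n, e n ≤ 2 - 2 * (ψ (Δ n)).re := by
    intro n
    have hexp : star (Δ n - 1) * (Δ n - 1)
        = star (Δ n) * Δ n + 1 - star (Δ n) - Δ n := by
      rw [star_sub, star_one]; noncomm_ring
    have hψe : e n = (ψ (star (Δ n) * Δ n)).re + (ψ (1 : A)).re
        - (ψ (Δ n)).re - (ψ (Δ n)).re := by
      have hst : (ψ (star (Δ n))).re = (ψ (Δ n)).re := by
        rw [aux_herm hψ, Complex.conj_re]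
      rw [he]
      simp only [hexp, map_sub, map_add, Complex.sub_re, Complex.add_re, hst]
    have h1 : (ψ (star (Δ n) * Δ n)).re ≤ 1 := by
      calc (ψ (star (Δ n) * Δ n)).re ≤ ‖ψ (star (Δ n) * Δ n)‖ := Complex.re_le_norm _
        _ ≤ ‖star (Δ n) * Δ n‖ := aux_abs_le hψ _
        _ = ‖Δ n‖ * ‖Δ n‖ := CStarRing.norm_star_mul_self
        _ = 1 := by rw [hnorm n, one_mul]
    have h2 : (ψ (1 : A)).re ≤ 1 := by
      calc (ψ (1 : A)).re ≤ ‖ψ (1 : A)‖ := Complex.re_le_norm _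
        _ ≤ ‖(1 : A)‖ := aux_abs_le hψ _
        _ = 1 := norm_one
    rw [hψe]; linarith
  have hre : Tendsto (fun n => (ψ (Δ n)).re) atTop (nhds 1) := by
    have := (Complex.continuous_re.tendsto 1).comp htend
    simpa [Function.comp_def] using this
  have he_tend : Tendsto e atTop (nhds 0) := by
    refine squeeze_zero he0 heup ?_
    have := (hre.const_mul 2).const_sub 2
    simpa using this
  have hsq : Tendsto (fun n => Real.sqrt (e n)) atTop (nhds 0) := by
    have := (Real.continuous_sqrt.tendsto 0).comp he_tend
    simpa [Function.comp_def] using this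
  -- ψ (Δ* a Δ) → ψ a
  have hdiff : Tendsto (fun n => ψ (star (Δ n) * a * Δ n) - ψ a) atTop (nhds 0) := by
    have hbound : ∀ n, ‖ψ (star (Δ n) * a * Δ n) - ψ a‖
        ≤ ‖a‖ * Real.sqrt (e n) + Real.sqrt (e n) * ‖a‖ := by
      intro n
      have hsplit : ψ (star (Δ n) * a * Δ n) - ψ a
          = ψ (star (star a * Δ n) * (Δ n - 1)) + ψ (star (Δ n - 1) * a) := by
        rw [← map_add, ← map_sub]
        congr 1
        rw [star_mul, star_star, star_sub, star_one]
        noncomm_ring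
      rw [hsplit]
      have ht1 : ‖ψ (star (star a * Δ n) * (Δ n - 1))‖
          ≤ ‖a‖ * Real.sqrt (e n) := by
        refine le_trans (aux_cs' hψ _ _) ?_
        gcongr
        · refine aux_sqrt_le hψ _ (norm_nonneg a) ?_
          calc ‖star a * Δ n‖ ≤ ‖star a‖ * ‖Δ n‖ := norm_mul_le _ _
            _ = ‖a‖ := by rw [norm_star, hnorm n, mul_one]
      have ht2 : ‖ψ (star (Δ n - 1) * a)‖ ≤ Real.sqrt (e n) * ‖a‖ := by
        refine le_trans (aux_cs' hψ _ _) ?_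
        gcongr
        · exact aux_sqrt_le hψ _ (norm_nonneg a) le_rfl
      calc ‖ψ (star (star a * Δ n) * (Δ n - 1)) + ψ (star (Δ n - 1) * a)‖
          ≤ ‖ψ (star (star a * Δ n) * (Δ n - 1))‖
            + ‖ψ (star (Δ n - 1) * a)‖ := norm_add_le _ _
        _ ≤ ‖a‖ * Real.sqrt (e n) + Real.sqrt (e n) * ‖a‖ := add_le_add ht1 ht2
    refine squeeze_zero_norm hbound ?_
    have := (hsq.const_mul ‖a‖).add (hsq.mul_const ‖a‖)
    simpa using this
  have htendd : Tendsto (fun n => ψ (star (Δ n) * a * Δ n)) atTop (nhds (ψ a)) :=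
    tendsto_sub_nhds_zero_iff.mp hdiff
  have hv : Tendsto (fun n => ‖ψ (star (Δ n) * a * Δ n)‖) atTop
      (nhds (‖ψ a‖)) := (continuous_norm.tendsto _).comp htendd
  -- conclusion
  have hub : ∀ n, ‖star (Δ n) * a * Δ n‖ ≤ ‖a‖ := by
    intro n
    calc ‖star (Δ n) * a * Δ n‖ ≤ ‖star (Δ n) * a‖ * ‖Δ n‖ := norm_mul_le _ _
      _ ≤ ‖star (Δ n)‖ * ‖a‖ * ‖Δ n‖ := by gcongr; exact norm_mul_le _ _
      _ = ‖a‖ := by rw [norm_star, hnorm n, one_mul, mul_one]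
  refine tendsto_of_le_liminf_of_limsup_le ?_ (hsup a) ?_ ?_
  · rw [← hv.liminf_eq]
    refine liminf_le_liminf (Eventually.of_forall fun n => aux_abs_le hψ _) ?_ ?_
    · exact isBoundedUnder_of ⟨0, fun n => norm_nonneg _⟩
    · exact IsBoundedUnder.isCoboundedUnder_ge (isBoundedUnder_of ⟨‖a‖, hub⟩)
  · exact isBoundedUnder_of ⟨‖a‖, hub⟩
  · exact isBoundedUnder_of ⟨0, fun n => norm_nonneg _⟩
end

section
/- Let A be a unital C*-algebra and let S ⊂ A be an operator system. Let π : A → B(H) be a unital *-representation and let Π : A → B(H) be a unital completely positive map which agrees with π on S. Let ψ be a state on A which admits a characteristic sequence (Δ_n) with Δ_n ∈ S for all n. Then lim_{n→∞} ‖π(Δ_n)* (Π(a) − π(a)) π(Δ_n)‖ = 0 for every a ∈ A. -/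
open Filter Topology
open scoped ComplexOrder InnerProductSpace

/-- A unital completely positive map from `A` to `B(H)`: it is unital, and for every `n`,
the induced map on `n × n` matrices sends positive matrices (those of the form `Nᴴ * N`)
to positive operators on the `n`-fold Hilbert space direct sum of `H`. -/
def IsUCP {A : Type*} [CStarAlgebra A] {H : Type*} [NormedAddCommGroup H]
    [InnerProductSpace ℂ H] (Φ : A →L[ℂ] (H →L[ℂ] H)) : Prop :=
  Φ 1 = 1 ∧ ∀ (n : ℕ) (M : Matrix (Fin n) (Fin n) A),
    (∃ N : Matrix (Fin n) (Fin n) A, M = N.conjTranspose * N) →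
    ∀ ξ : Fin n → H, 0 ≤ ∑ i, ∑ j, ⟪ξ i, Φ (M i j) (ξ j)⟫_ℂ

section Auxiliary

/-- Abstract Cauchy–Schwarz-type inequality obtained from positivity of a quadratic form. -/
private lemma cs_key (A B B' C : ℂ) (hA : 0 ≤ A) (hC : 0 ≤ C)
    (h : ∀ c : ℂ, 0 ≤ A + c * B + (starRingEnd ℂ) c * B' + (c * (starRingEnd ℂ) c) * C) :
    ‖B‖ ^ 2 ≤ A.re * C.re := by
  have hAre : 0 ≤ A.re := (Complex.le_def.mp hA).1
  have hCre : 0 ≤ C.re := (Complex.le_def.mp hC).1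
  have hAim : A.im = 0 := ((Complex.le_def.mp hA).2).symm
  have hCim : C.im = 0 := ((Complex.le_def.mp hC).2).symm
  have h1 := Complex.le_def.mp (h 1)
  have hi := Complex.le_def.mp (h Complex.I)
  have e1 : B.im + B'.im = 0 := by
    have := h1.2; simp [Complex.add_im, hAim, hCim] at this; linarith
  have e2 : B.re - B'.re = 0 := by
    have := hi.2
    simp [Complex.add_im, Complex.mul_im, Complex.mul_re, hAim, hCim] at this
    linarith
  have hB' : B' = (starRingEnd ℂ) B := by
    apply Complex.ext <;> simp [Complex.conj_re, Complex.conj_im] <;> linarith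
  have nb : ‖B‖ ^ 2 = B.re ^ 2 + B.im ^ 2 := by
    rw [Complex.sq_norm, Complex.normSq_apply]; ring
  set β : ℝ := ‖B‖ ^ 2 with hβ
  have key : ∀ t : ℝ, 0 ≤ A.re - 2 * t * β + t ^ 2 * β * C.re := by
    intro t
    have hre := (Complex.le_def.mp (h (-(t : ℂ) * (starRingEnd ℂ) B))).1
    rw [hB'] at hre
    simp only [Complex.add_re, Complex.mul_re, Complex.mul_im, Complex.neg_re, Complex.neg_im,
      Complex.conj_re, Complex.conj_im, Complex.ofReal_re, Complex.ofReal_im, Complex.zero_re,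
      hAim, hCim] at hre
    rw [nb]
    nlinarith [hre]
  by_cases hb : ‖B‖ = 0
  · rw [hβ, hb]; simpa using mul_nonneg hAre hCre
  · have hbpos : 0 < β := by rw [hβ]; positivity
    rcases eq_or_lt_of_le hCre with hC0 | hC0
    · exfalso
      have hk := key ((A.re + 1) / (2 * β))
      have h2 : 2 * ((A.re + 1) / (2 * β)) * β = A.re + 1 := by field_simp
      rw [← hC0] at hk
      rw [h2] at hk; simp at hk; linarith
    · have hk := key (1 / C.re)
      have h2 : 2 * (1 / C.re) * β = 2 * (β / C.re) := by ring
      have h3 : (1 / C.re) ^ 2 * β * C.re = β / C.re := by field_simp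
      rw [h2, h3] at hk
      have h4 : β / C.re ≤ A.re := by linarith
      calc β = (β / C.re) * C.re := by field_simp
        _ ≤ A.re * C.re := by exact mul_le_mul_of_nonneg_right h4 hCre

variable {A : Type*} [CStarAlgebra A] {H : Type*} [NormedAddCommGroup H]
    [InnerProductSpace ℂ H] {Φ : A →L[ℂ] (H →L[ℂ] H)}

private lemma ucp_pos (hΦ : IsUCP Φ) (c : A) (ξ : H) : 0 ≤ ⟪ξ, Φ (star c * c) ξ⟫_ℂ := by
  have h := hΦ.2 1 (Matrix.of fun _ _ => star c * c)
    ⟨Matrix.of fun _ _ => c, by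
      ext i j
      simp [Matrix.mul_apply, Matrix.conjTranspose_apply]⟩ (fun _ => ξ)
  simpa using h

private lemma ucp_pos2 (hΦ : IsUCP Φ) (x y : A) (ξ₁ ξ₂ : H) (c : ℂ) :
    0 ≤ ⟪ξ₁, Φ (star x * x) ξ₁⟫_ℂ + c * ⟪ξ₁, Φ (star x * y) ξ₂⟫_ℂ
      + (starRingEnd ℂ) c * ⟪ξ₂, Φ (star y * x) ξ₁⟫_ℂ
      + (c * (starRingEnd ℂ) c) * ⟪ξ₂, Φ (star y * y) ξ₂⟫_ℂ := by
  have hM : (Matrix.of ![![star x * x, star x * y], ![star y * x, star y * y]]) =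
      (Matrix.of ![![x, y], ![(0 : A), 0]]).conjTranspose * (Matrix.of ![![x, y], ![0, 0]]) := by
    ext i j
    fin_cases i <;> fin_cases j <;>
      simp [Matrix.mul_apply, Matrix.conjTranspose_apply, Fin.sum_univ_two]
  have h := hΦ.2 2 _ ⟨_, hM⟩ ![ξ₁, c • ξ₂]
  simp only [Fin.sum_univ_two, Matrix.cons_val_zero, Matrix.cons_val_one, Matrix.head_cons,
    Matrix.of_apply, map_smul, inner_smul_left, inner_smul_right, Matrix.head_fin_const] at h
  convert h using 1
  ring

private lemma ucp_cs (hΦ : IsUCP Φ) (x y : A) (ξ₁ ξ₂ : H) :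
    ‖⟪ξ₁, Φ (star x * y) ξ₂⟫_ℂ‖ ^ 2 ≤
      (⟪ξ₁, Φ (star x * x) ξ₁⟫_ℂ).re * (⟪ξ₂, Φ (star y * y) ξ₂⟫_ℂ).re :=
  cs_key _ _ _ _ (ucp_pos hΦ x ξ₁) (ucp_pos hΦ y ξ₂) (ucp_pos2 hΦ x y ξ₁ ξ₂)

private lemma ucp_bound (hΦ : IsUCP Φ) (y : A) (ξ : H) :
    (⟪ξ, Φ (star y * y) ξ⟫_ℂ).re ≤ ‖y‖ ^ 2 * ‖ξ‖ ^ 2 := by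
  letI := CStarAlgebra.spectralOrder A
  haveI := CStarAlgebra.spectralOrderedRing A
  set d : A := algebraMap ℝ A ‖star y * y‖ - star y * y with hd
  have hd0 : 0 ≤ d := by
    have := IsSelfAdjoint.le_algebraMap_norm_self (a := star y * y) (IsSelfAdjoint.star_mul_self y)
    rwa [← sub_nonneg] at this
  obtain ⟨c, hc⟩ : ∃ c : A, star c * c = d := by
    refine ⟨CFC.sqrt d, ?_⟩
    rw [(IsSelfAdjoint.of_nonneg (CFC.sqrt_nonneg (a := d))).star_eq, CFC.sqrt_mul_sqrt_self d hd0]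
  have hpos := ucp_pos hΦ c ξ
  rw [hc] at hpos
  have hsplit : star y * y = algebraMap ℝ A ‖star y * y‖ - d := by
    rw [hd, sub_sub_cancel]
  have halg : Φ (algebraMap ℝ A ‖star y * y‖) = ((‖star y * y‖ : ℂ)) • (1 : H →L[ℂ] H) := by
    have h1 : algebraMap ℝ A ‖star y * y‖ = ((‖star y * y‖ : ℂ)) • (1 : A) := by
      rw [IsScalarTower.algebraMap_apply ℝ ℂ A, Algebra.algebraMap_eq_smul_one,
        Complex.coe_algebraMap]
    rw [h1, map_smul, hΦ.1]
  have hre0 : 0 ≤ (⟪ξ, Φ d ξ⟫_ℂ).re := (Complex.le_def.mp hpos).1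
  set r : ℝ := ‖star y * y‖ with hr
  have heq : (⟪ξ, Φ (star y * y) ξ⟫_ℂ).re
      = r * ‖ξ‖ ^ 2 - (⟪ξ, Φ d ξ⟫_ℂ).re := by
    rw [hsplit, map_sub, ContinuousLinearMap.sub_apply, inner_sub_right, halg]
    rw [ContinuousLinearMap.smul_apply, ContinuousLinearMap.one_apply, inner_smul_right,
      inner_self_eq_norm_sq_to_K]
    simp [Complex.sub_re, Complex.mul_re, Complex.ofReal_re, Complex.ofReal_im,
      ← Complex.ofReal_pow]
  have hrr : r = ‖y‖ * ‖y‖ := by rw [hr, CStarRing.norm_star_mul_self]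
  rw [heq, hrr]
  nlinarith [hre0, norm_nonneg y, norm_nonneg ξ]

private lemma state_one_s12 {ψ : A →L[ℂ] ℂ} (hψ : IsState ψ) : ψ 1 = 1 := by
  have hnt : Nontrivial A := by
    by_contra hn
    rw [not_nontrivial_iff_subsingleton] at hn
    have : ψ = 0 := by ext a; rw [Subsingleton.elim a 0, map_zero]; rfl
    rw [this] at hψ
    simpa using hψ.1
  have hA : 0 ≤ ψ 1 := by simpa using hψ.2 1
  have hkey : ∀ y : A, ‖ψ y‖ ^ 2 ≤ (ψ 1).re * (ψ (star y * y)).re := by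
    intro y
    refine cs_key (ψ 1) (ψ y) (ψ (star y)) (ψ (star y * y)) hA (hψ.2 y) fun c => ?_
    have hexp : star (1 + c • y) * (1 + c • y)
        = 1 + c • y + (starRingEnd ℂ) c • star y
          + (c * (starRingEnd ℂ) c) • (star y * y) := by
      simp only [star_add, star_smul, star_one, RCLike.star_def, add_mul, mul_add, one_mul,
        mul_one, smul_mul_assoc, mul_smul_comm, smul_smul, smul_add,
        mul_comm ((starRingEnd ℂ) c) c]
      abel
    have := hψ.2 (1 + c • y)
    rw [hexp] at this
    simpa [map_add, map_smul, smul_eq_mul, mul_assoc] using this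
  have hyb : ∀ y : A, (ψ (star y * y)).re ≤ ‖y‖ ^ 2 := by
    intro y
    calc (ψ (star y * y)).re ≤ ‖ψ (star y * y)‖ := Complex.re_le_norm _
      _ ≤ ‖ψ‖ * ‖star y * y‖ := ψ.le_opNorm _
      _ = ‖y‖ ^ 2 := by rw [hψ.1, one_mul, CStarRing.norm_star_mul_self]; ring
  have hre1 : 0 ≤ (ψ 1).re := (Complex.le_def.mp hA).1
  have hnorm : ‖ψ‖ ≤ Real.sqrt ((ψ 1).re) := by
    refine ψ.opNorm_le_bound (Real.sqrt_nonneg _) fun y => ?_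
    have h1 : ‖ψ y‖ ^ 2 ≤ (ψ 1).re * ‖y‖ ^ 2 := by
      calc ‖ψ y‖ ^ 2 ≤ (ψ 1).re * (ψ (star y * y)).re := hkey y
        _ ≤ (ψ 1).re * ‖y‖ ^ 2 := by
            exact mul_le_mul_of_nonneg_left (hyb y) hre1
    calc ‖ψ y‖ = Real.sqrt (‖ψ y‖ ^ 2) := by rw [Real.sqrt_sq (norm_nonneg _)]
      _ ≤ Real.sqrt ((ψ 1).re * ‖y‖ ^ 2) := Real.sqrt_le_sqrt h1
      _ = Real.sqrt ((ψ 1).re) * ‖y‖ := by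
          rw [Real.sqrt_mul hre1, Real.sqrt_sq (norm_nonneg _)]
  have hge : 1 ≤ (ψ 1).re := by
    rw [← Real.one_le_sqrt]
    calc (1 : ℝ) = ‖ψ‖ := hψ.1.symm
      _ ≤ Real.sqrt ((ψ 1).re) := hnorm
  have hle : (ψ 1).re ≤ 1 := by
    calc (ψ 1).re ≤ ‖ψ 1‖ := Complex.re_le_norm _
      _ ≤ ‖ψ‖ * ‖(1 : A)‖ := ψ.le_opNorm _
      _ = 1 := by rw [hψ.1, norm_one, one_mul]
  have him : (ψ 1).im = 0 := ((Complex.le_def.mp hA).2).symm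
  apply Complex.ext
  · simp; linarith
  · simp [him]

private lemma opnorm_le_of_inner [CompleteSpace H] (T : H →L[ℂ] H) (C : ℝ) (hC : 0 ≤ C)
    (h : ∀ η ζ : H, ‖⟪η, T ζ⟫_ℂ‖ ≤ C * ‖η‖ * ‖ζ‖) : ‖T‖ ≤ C := by
  refine T.opNorm_le_bound hC fun ζ => ?_
  rcases eq_or_lt_of_le (norm_nonneg (T ζ)) with h0 | h0
  · rw [← h0]; positivity
  · have := h (T ζ) ζ
    rw [inner_self_eq_norm_sq_to_K] at this
    have h2 : ‖T ζ‖ ^ 2 ≤ C * ‖T ζ‖ * ‖ζ‖ := by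
      simpa [← Complex.ofReal_pow] using this
    nlinarith

end Auxiliary

set_option maxHeartbeats 1000000 in
/-- with `π`, `Φ`, `ψ`, `(Δ n)` as in the local hyperrigidity setup,
`‖π (Δ n)⋆ * (Φ a - π a) * π (Δ n)‖ → 0` for every `a ∈ A`. -/
theorem stmt12 {A : Type*} [CStarAlgebra A]
    {H : Type*} [NormedAddCommGroup H] [InnerProductSpace ℂ H] [CompleteSpace H]
    (S : Submodule ℂ A) (hS1 : (1 : A) ∈ S) (hSstar : ∀ x ∈ S, star x ∈ S)
    (π : A →⋆ₐ[ℂ] (H →L[ℂ] H)) (Φ : A →L[ℂ] (H →L[ℂ] H)) (hΦ : IsUCP Φ)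
    (hagree : ∀ s ∈ S, Φ s = π s)
    (ψ : A →L[ℂ] ℂ) (hψ : IsState ψ) (Δ : ℕ → A)
    (hΔ : IsCharacteristicSequence ψ Δ) (hΔS : ∀ n, Δ n ∈ S) :
    ∀ a : A, Tendsto (fun n => ‖star (π (Δ n)) * (Φ a - π a) * π (Δ n)‖) atTop (nhds 0) := by
  intro a
  have hψ1 : ψ 1 = 1 := state_one_s12 hψ
  set b : A := a - ψ a • 1 with hbdef
  have hψb : ψ b = 0 := by
    rw [hbdef, map_sub, map_smul, hψ1, smul_eq_mul, mul_one, sub_self]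
  -- contractivity of π
  have hπc : ∀ x : A, ‖π x‖ ≤ ‖x‖ := fun x => NonUnitalStarAlgHom.norm_apply_le π x
  have hπv : ∀ (x : A) (χ : H), ‖π x χ‖ ≤ ‖x‖ * ‖χ‖ := by
    intro x χ
    calc ‖π x χ‖ ≤ ‖π x‖ * ‖χ‖ := (π x).le_opNorm χ
      _ ≤ ‖x‖ * ‖χ‖ := mul_le_mul_of_nonneg_right (hπc x) (norm_nonneg χ)
  -- rewriting the target
  have hdiff : ∀ n, star (π (Δ n)) * (Φ a - π a) * π (Δ n)
      = star (π (Δ n)) * (Φ b) * π (Δ n) - π (star (Δ n) * b * Δ n) := by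
    intro n
    have h1 : Φ b = Φ a - ψ a • 1 := by rw [hbdef, map_sub, map_smul, hΦ.1]
    have h2 : π b = π a - ψ a • 1 := by rw [hbdef, map_sub, map_smul, map_one]
    have h3 : Φ a - π a = Φ b - π b := by rw [h1, h2]; abel
    rw [h3, mul_sub, sub_mul]
    congr 1
    simp [map_mul, map_star, mul_assoc]
  -- smallness facts from the characteristic sequence
  have hbdd : ∀ c : A, IsBoundedUnder (· ≤ ·) atTop (fun n => ‖star (Δ n) * c * Δ n‖) := by
    intro c
    refine isBoundedUnder_of ⟨‖c‖, fun n => ?_⟩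
    calc ‖star (Δ n) * c * Δ n‖ ≤ ‖star (Δ n) * c‖ * ‖Δ n‖ := norm_mul_le _ _
      _ ≤ ‖star (Δ n)‖ * ‖c‖ * ‖Δ n‖ :=
          mul_le_mul_of_nonneg_right (norm_mul_le _ _) (norm_nonneg _)
      _ = ‖c‖ := by rw [norm_star, hΔ.1 n]; ring
  have hsmall : ∀ c : A, ∀ ε : ℝ, ‖ψ c‖ < ε →
      ∀ᶠ n in atTop, ‖star (Δ n) * c * Δ n‖ < ε := by
    intro c ε hε
    exact eventually_lt_of_limsup_lt (lt_of_le_of_lt (hΔ.2.2 c) hε) (hbdd c)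
  ------------------------------------------------------------------
  -- the main quantitative estimate
  ------------------------------------------------------------------
  have main : ∀ m n : ℕ,
      ‖star (π (Δ n)) * (Φ b) * π (Δ n)‖ ≤
        2 * ‖b‖ * Real.sqrt (2 * ‖star (Δ n) * (1 - Δ m) * Δ n‖)
          + ‖Φ‖ * ‖star (Δ m) * b * Δ m‖ := by
    intro m n
    set κ : ℝ := ‖star (Δ n) * (1 - Δ m) * Δ n‖ with hκ
    have hκ0 : 0 ≤ κ := norm_nonneg _
    set g : A := star (1 - Δ m) * (1 - Δ m) with hg
    -- the defect estimate
    have hD : ∀ χ : H, (⟪π (Δ n) χ, Φ g (π (Δ n) χ)⟫_ℂ).re ≤ 2 * κ * ‖χ‖ ^ 2 := by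
      intro χ
      set u : H := π (Δ n) χ with hu
      have hgexp : g = 1 - Δ m - star (Δ m) + star (Δ m) * Δ m := by
        rw [hg]; simp [star_sub, sub_mul, mul_sub]; noncomm_ring
      have hΦ1 : Φ (Δ m) = π (Δ m) := hagree _ (hΔS m)
      have hΦ2 : Φ (star (Δ m)) = π (star (Δ m)) := hagree _ (hSstar _ (hΔS m))
      have hexp : ⟪u, Φ g u⟫_ℂ
          = ⟪u, u⟫_ℂ - ⟪u, π (Δ m) u⟫_ℂ - ⟪u, π (star (Δ m)) u⟫_ℂ
            + ⟪u, Φ (star (Δ m) * Δ m) u⟫_ℂ := by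
        rw [hgexp, map_add, map_sub, map_sub, hΦ1, hΦ2, hΦ.1]
        simp [ContinuousLinearMap.add_apply, ContinuousLinearMap.sub_apply,
          inner_add_right, inner_sub_right]
      have hstar' : (⟪u, π (star (Δ m)) u⟫_ℂ).re = (⟪u, π (Δ m) u⟫_ℂ).re := by
        rw [map_star, ContinuousLinearMap.star_eq_adjoint,
          ContinuousLinearMap.adjoint_inner_right, ← inner_conj_symm]
        exact Complex.conj_re _
      have hlast : (⟪u, Φ (star (Δ m) * Δ m) u⟫_ℂ).re ≤ ‖u‖ ^ 2 := by
        calc (⟪u, Φ (star (Δ m) * Δ m) u⟫_ℂ).re ≤ ‖Δ m‖ ^ 2 * ‖u‖ ^ 2 := ucp_bound hΦ _ u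
          _ = ‖u‖ ^ 2 := by rw [hΔ.1 m]; ring
      have hself : (⟪u, u⟫_ℂ).re = ‖u‖ ^ 2 := by
        rw [inner_self_eq_norm_sq_to_K]; simp [← Complex.ofReal_pow]
      -- convert to a statement about χ
      have hpull : ‖u‖ ^ 2 - (⟪u, π (Δ m) u⟫_ℂ).re
          = (⟪χ, π (star (Δ n) * (1 - Δ m) * Δ n) χ⟫_ℂ).re := by
        have e1 : ⟪u, u⟫_ℂ = ⟪χ, π (star (Δ n) * Δ n) χ⟫_ℂ := by
          rw [hu, map_mul, ContinuousLinearMap.mul_apply,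
            ← ContinuousLinearMap.adjoint_inner_right, ← ContinuousLinearMap.star_eq_adjoint,
            ← map_star]
        have e2 : ⟪u, π (Δ m) u⟫_ℂ = ⟪χ, π (star (Δ n) * Δ m * Δ n) χ⟫_ℂ := by
          rw [hu, map_mul, map_mul, ContinuousLinearMap.mul_apply,
            ContinuousLinearMap.mul_apply, ← ContinuousLinearMap.adjoint_inner_right,
            ← ContinuousLinearMap.star_eq_adjoint, ← map_star]
        have e3 : star (Δ n) * Δ n - star (Δ n) * Δ m * Δ n
            = star (Δ n) * (1 - Δ m) * Δ n := by noncomm_ring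
        rw [← hself, e1, e2, ← Complex.sub_re, ← inner_sub_right, ← ContinuousLinearMap.sub_apply,
          ← map_sub, e3]
      have hbd : (⟪χ, π (star (Δ n) * (1 - Δ m) * Δ n) χ⟫_ℂ).re ≤ κ * ‖χ‖ ^ 2 := by
        calc (⟪χ, π (star (Δ n) * (1 - Δ m) * Δ n) χ⟫_ℂ).re
            ≤ ‖⟪χ, π (star (Δ n) * (1 - Δ m) * Δ n) χ⟫_ℂ‖ := Complex.re_le_norm _
          _ ≤ ‖χ‖ * ‖π (star (Δ n) * (1 - Δ m) * Δ n) χ‖ := norm_inner_le_norm _ _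
          _ ≤ ‖χ‖ * (κ * ‖χ‖) := by
              exact mul_le_mul_of_nonneg_left (hκ ▸ hπv _ χ) (norm_nonneg χ)
          _ = κ * ‖χ‖ ^ 2 := by ring
      have hre : (⟪u, Φ g u⟫_ℂ).re
          = (⟪u, u⟫_ℂ).re - (⟪u, π (Δ m) u⟫_ℂ).re - (⟪u, π (star (Δ m)) u⟫_ℂ).re
            + (⟪u, Φ (star (Δ m) * Δ m) u⟫_ℂ).re := by
        rw [hexp]; simp
      have hkey2 : ‖u‖ ^ 2 - (⟪u, π (Δ m) u⟫_ℂ).re ≤ κ * ‖χ‖ ^ 2 := by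
        rw [hpull]; exact hbd
      linarith [hlast, hre, hkey2, hself, hstar']
    -- decomposition of b
    have hdec : b = star (1 - Δ m) * b + star (star b * Δ m) * (1 - Δ m)
        + star (Δ m) * b * Δ m := by
      simp only [star_sub, star_one, star_mul, star_star]
      noncomm_ring
    have hsq2κ : Real.sqrt (2 * κ) ^ 2 = 2 * κ := Real.sq_sqrt (by positivity)
    have hC0 : 0 ≤ 2 * ‖b‖ * Real.sqrt (2 * κ) + ‖Φ‖ * ‖star (Δ m) * b * Δ m‖ := by positivity
    refine opnorm_le_of_inner _ _ hC0 fun η ζ => ?_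
    set u : H := π (Δ n) η with hu
    set w : H := π (Δ n) ζ with hw
    have hun : ‖u‖ ≤ ‖η‖ := by
      calc ‖u‖ ≤ ‖Δ n‖ * ‖η‖ := hπv _ η
        _ = ‖η‖ := by rw [hΔ.1 n, one_mul]
    have hwn : ‖w‖ ≤ ‖ζ‖ := by
      calc ‖w‖ ≤ ‖Δ n‖ * ‖ζ‖ := hπv _ ζ
        _ = ‖ζ‖ := by rw [hΔ.1 n, one_mul]
    have hinner : ⟪η, (star (π (Δ n)) * Φ b * π (Δ n)) ζ⟫_ℂ = ⟪u, Φ b w⟫_ℂ := by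
      rw [ContinuousLinearMap.mul_apply, ContinuousLinearMap.mul_apply,
        ContinuousLinearMap.star_eq_adjoint, ContinuousLinearMap.adjoint_inner_right]
    have hsplitΦ : ⟪u, Φ b w⟫_ℂ = ⟪u, Φ (star (1 - Δ m) * b) w⟫_ℂ
        + ⟪u, Φ (star (star b * Δ m) * (1 - Δ m)) w⟫_ℂ
        + ⟪u, Φ (star (Δ m) * b * Δ m) w⟫_ℂ := by
      conv_lhs => rw [hdec]
      rw [map_add, map_add]
      simp [ContinuousLinearMap.add_apply, inner_add_right]
    have sqrt_helper : ∀ (t : ℂ) (x y : ℝ), 0 ≤ x → 0 ≤ y → ‖t‖ ^ 2 ≤ x ^ 2 * y ^ 2 →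
        ‖t‖ ≤ x * y := by
      intro t x y hx hy h
      have h1 : ‖t‖ = Real.sqrt (‖t‖ ^ 2) := (Real.sqrt_sq (norm_nonneg t)).symm
      rw [h1]
      calc Real.sqrt (‖t‖ ^ 2) ≤ Real.sqrt ((x * y) ^ 2) := by
            apply Real.sqrt_le_sqrt; nlinarith
        _ = x * y := Real.sqrt_sq (by positivity)
    -- first term
    have ht1 : ‖⟪u, Φ (star (1 - Δ m) * b) w⟫_ℂ‖
        ≤ (Real.sqrt (2 * κ) * ‖η‖) * (‖b‖ * ‖ζ‖) := by
      refine sqrt_helper _ _ _ (by positivity) (by positivity) ?_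
      have h1 := ucp_cs hΦ (1 - Δ m) b u w
      have h2 : (⟪u, Φ (star (1 - Δ m) * (1 - Δ m)) u⟫_ℂ).re ≤ 2 * κ * ‖η‖ ^ 2 := by
        have := hD η; rw [← hu] at this; rw [← hg]; exact this
      have h3 : (⟪w, Φ (star b * b) w⟫_ℂ).re ≤ ‖b‖ ^ 2 * ‖ζ‖ ^ 2 := by
        calc (⟪w, Φ (star b * b) w⟫_ℂ).re ≤ ‖b‖ ^ 2 * ‖w‖ ^ 2 := ucp_bound hΦ b w
          _ ≤ ‖b‖ ^ 2 * ‖ζ‖ ^ 2 := by gcongr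
      have h4 : 0 ≤ (⟪w, Φ (star b * b) w⟫_ℂ).re :=
        (Complex.le_def.mp (ucp_pos hΦ b w)).1
      have h5 : 0 ≤ (⟪u, Φ (star (1 - Δ m) * (1 - Δ m)) u⟫_ℂ).re :=
        (Complex.le_def.mp (ucp_pos hΦ (1 - Δ m) u)).1
      calc ‖⟪u, Φ (star (1 - Δ m) * b) w⟫_ℂ‖ ^ 2
          ≤ (⟪u, Φ (star (1 - Δ m) * (1 - Δ m)) u⟫_ℂ).re * (⟪w, Φ (star b * b) w⟫_ℂ).re := h1
        _ ≤ (2 * κ * ‖η‖ ^ 2) * (‖b‖ ^ 2 * ‖ζ‖ ^ 2) := by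
            apply mul_le_mul h2 h3 h4 (by positivity)
        _ = (Real.sqrt (2 * κ) * ‖η‖) ^ 2 * (‖b‖ * ‖ζ‖) ^ 2 := by
            rw [mul_pow, hsq2κ]; ring
    -- second term
    have ht2 : ‖⟪u, Φ (star (star b * Δ m) * (1 - Δ m)) w⟫_ℂ‖
        ≤ (‖b‖ * ‖η‖) * (Real.sqrt (2 * κ) * ‖ζ‖) := by
      refine sqrt_helper _ _ _ (by positivity) (by positivity) ?_
      have h1 := ucp_cs hΦ (star b * Δ m) (1 - Δ m) u w
      have h2 : (⟪w, Φ (star (1 - Δ m) * (1 - Δ m)) w⟫_ℂ).re ≤ 2 * κ * ‖ζ‖ ^ 2 := by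
        have := hD ζ; rw [← hw] at this; rw [← hg]; exact this
      have hnb : ‖star b * Δ m‖ ≤ ‖b‖ := by
        calc ‖star b * Δ m‖ ≤ ‖star b‖ * ‖Δ m‖ := norm_mul_le _ _
          _ = ‖b‖ := by rw [norm_star, hΔ.1 m, mul_one]
      have h3 : (⟪u, Φ (star (star b * Δ m) * (star b * Δ m)) u⟫_ℂ).re
          ≤ ‖b‖ ^ 2 * ‖η‖ ^ 2 := by
        calc (⟪u, Φ (star (star b * Δ m) * (star b * Δ m)) u⟫_ℂ).re
            ≤ ‖star b * Δ m‖ ^ 2 * ‖u‖ ^ 2 := ucp_bound hΦ _ u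
          _ ≤ ‖b‖ ^ 2 * ‖η‖ ^ 2 := by gcongr
      have h4 : 0 ≤ (⟪w, Φ (star (1 - Δ m) * (1 - Δ m)) w⟫_ℂ).re :=
        (Complex.le_def.mp (ucp_pos hΦ (1 - Δ m) w)).1
      calc ‖⟪u, Φ (star (star b * Δ m) * (1 - Δ m)) w⟫_ℂ‖ ^ 2
          ≤ (⟪u, Φ (star (star b * Δ m) * (star b * Δ m)) u⟫_ℂ).re
            * (⟪w, Φ (star (1 - Δ m) * (1 - Δ m)) w⟫_ℂ).re := h1
        _ ≤ (‖b‖ ^ 2 * ‖η‖ ^ 2) * (2 * κ * ‖ζ‖ ^ 2) := by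
            apply mul_le_mul h3 h2 h4 (by positivity)
        _ = (‖b‖ * ‖η‖) ^ 2 * (Real.sqrt (2 * κ) * ‖ζ‖) ^ 2 := by
            rw [mul_pow, mul_pow, hsq2κ]; try ring
    -- third term
    have ht3 : ‖⟪u, Φ (star (Δ m) * b * Δ m) w⟫_ℂ‖
        ≤ ‖η‖ * (‖Φ‖ * ‖star (Δ m) * b * Δ m‖ * ‖ζ‖) := by
      calc ‖⟪u, Φ (star (Δ m) * b * Δ m) w⟫_ℂ‖
          ≤ ‖u‖ * ‖Φ (star (Δ m) * b * Δ m) w‖ := norm_inner_le_norm _ _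
        _ ≤ ‖η‖ * (‖Φ‖ * ‖star (Δ m) * b * Δ m‖ * ‖ζ‖) := by
            have hb1 : ‖Φ (star (Δ m) * b * Δ m) w‖
                ≤ ‖Φ‖ * ‖star (Δ m) * b * Δ m‖ * ‖ζ‖ := by
              calc ‖Φ (star (Δ m) * b * Δ m) w‖
                  ≤ ‖Φ (star (Δ m) * b * Δ m)‖ * ‖w‖ := ContinuousLinearMap.le_opNorm _ _
                _ ≤ (‖Φ‖ * ‖star (Δ m) * b * Δ m‖) * ‖ζ‖ := by
                    gcongr
                    exact Φ.le_opNorm _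
            exact mul_le_mul hun hb1 (norm_nonneg _) (norm_nonneg _)
    calc ‖⟪η, (star (π (Δ n)) * Φ b * π (Δ n)) ζ⟫_ℂ‖
        = ‖⟪u, Φ (star (1 - Δ m) * b) w⟫_ℂ
            + ⟪u, Φ (star (star b * Δ m) * (1 - Δ m)) w⟫_ℂ
            + ⟪u, Φ (star (Δ m) * b * Δ m) w⟫_ℂ‖ := by rw [hinner, hsplitΦ]
      _ ≤ ‖⟪u, Φ (star (1 - Δ m) * b) w⟫_ℂ
            + ⟪u, Φ (star (star b * Δ m) * (1 - Δ m)) w⟫_ℂ‖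
            + ‖⟪u, Φ (star (Δ m) * b * Δ m) w⟫_ℂ‖ := norm_add_le _ _
      _ ≤ ‖⟪u, Φ (star (1 - Δ m) * b) w⟫_ℂ‖
            + ‖⟪u, Φ (star (star b * Δ m) * (1 - Δ m)) w⟫_ℂ‖
            + ‖⟪u, Φ (star (Δ m) * b * Δ m) w⟫_ℂ‖ := by
          have := norm_add_le (⟪u, Φ (star (1 - Δ m) * b) w⟫_ℂ)
            (⟪u, Φ (star (star b * Δ m) * (1 - Δ m)) w⟫_ℂ)
          linarith
      _ ≤ (Real.sqrt (2 * κ) * ‖η‖) * (‖b‖ * ‖ζ‖) + (‖b‖ * ‖η‖) * (Real.sqrt (2 * κ) * ‖ζ‖)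
            + ‖η‖ * (‖Φ‖ * ‖star (Δ m) * b * Δ m‖ * ‖ζ‖) := by linarith [ht1, ht2, ht3]
      _ = (2 * ‖b‖ * Real.sqrt (2 * κ) + ‖Φ‖ * ‖star (Δ m) * b * Δ m‖) * ‖η‖ * ‖ζ‖ := by ring
  ------------------------------------------------------------------
  -- putting everything together
  ------------------------------------------------------------------
  rw [NormedAddCommGroup.tendsto_nhds_zero]
  intro ε hε
  have hM0 : (0:ℝ) ≤ ‖b‖ := norm_nonneg b
  have hK0 : (0:ℝ) ≤ ‖Φ‖ := ContinuousLinearMap.opNorm_nonneg Φ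
  set θ : ℝ := (ε / (4 * (‖b‖ + 1))) ^ 2 with hθ
  have hθ0 : 0 < θ := by rw [hθ]; positivity
  -- choose m
  have habsb : ‖ψ b‖ = 0 := by rw [hψb]; simp
  have hm1ev : ∀ᶠ m in atTop, ‖star (Δ m) * b * Δ m‖ < ε / (4 * (‖Φ‖ + 1)) := by
    refine hsmall b _ ?_
    rw [habsb]; positivity
  have hm2ev : ∀ᶠ m in atTop, ‖ψ (1 - Δ m)‖ < θ / 2 := by
    have h2' := Metric.tendsto_nhds.mp hΔ.2.1 (θ / 2) (by positivity)
    filter_upwards [h2'] with m hm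
    have : ψ (1 - Δ m) = 1 - ψ (Δ m) := by rw [map_sub, hψ1]
    rw [this, ← Complex.dist_eq, dist_comm]
    exact hm
  obtain ⟨m, hm1, hm2⟩ := (hm1ev.and hm2ev).exists
  -- eventual bounds in n
  have hev1 : ∀ᶠ n in atTop, ‖star (Δ n) * (1 - Δ m) * Δ n‖ < θ / 2 := hsmall _ _ hm2
  have hev2 : ∀ᶠ n in atTop, ‖star (Δ n) * b * Δ n‖ < ε / 4 := by
    refine hsmall b _ ?_
    rw [habsb]; positivity
  filter_upwards [hev1, hev2] with n h1 h2
  rw [norm_norm]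
  have hκ0 : (0:ℝ) ≤ ‖star (Δ n) * (1 - Δ m) * Δ n‖ := norm_nonneg _
  have hsqrt : Real.sqrt (2 * ‖star (Δ n) * (1 - Δ m) * Δ n‖) ≤ ε / (4 * (‖b‖ + 1)) := by
    have h3 : 2 * ‖star (Δ n) * (1 - Δ m) * Δ n‖ ≤ θ := by linarith
    calc Real.sqrt (2 * ‖star (Δ n) * (1 - Δ m) * Δ n‖) ≤ Real.sqrt θ := Real.sqrt_le_sqrt h3
      _ = ε / (4 * (‖b‖ + 1)) := by rw [hθ, Real.sqrt_sq (by positivity)]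
  have hterm1 : 2 * ‖b‖ * Real.sqrt (2 * ‖star (Δ n) * (1 - Δ m) * Δ n‖) ≤ ε / 2 := by
    have hs0 : 0 ≤ Real.sqrt (2 * ‖star (Δ n) * (1 - Δ m) * Δ n‖) := Real.sqrt_nonneg _
    have hb1 : 2 * ‖b‖ * Real.sqrt (2 * ‖star (Δ n) * (1 - Δ m) * Δ n‖)
        ≤ 2 * ‖b‖ * (ε / (4 * (‖b‖ + 1))) := by nlinarith
    have hb2 : 2 * ‖b‖ * (ε / (4 * (‖b‖ + 1))) ≤ ε / 2 := by
      have heq : 2 * ‖b‖ * (ε / (4 * (‖b‖ + 1))) = (ε / 2) * (‖b‖ / (‖b‖ + 1)) := by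
        field_simp; ring
      have hr0 : 0 ≤ ‖b‖ / (‖b‖ + 1) := by positivity
      have hr1 : ‖b‖ / (‖b‖ + 1) ≤ 1 := by
        rw [div_le_one (by linarith)]; linarith
      rw [heq]
      nlinarith [hε.le]
    linarith
  have hterm2 : ‖Φ‖ * ‖star (Δ m) * b * Δ m‖ ≤ ε / 4 := by
    have hq0 : (0:ℝ) ≤ ‖star (Δ m) * b * Δ m‖ := norm_nonneg _
    have h4 : ‖Φ‖ * ‖star (Δ m) * b * Δ m‖ ≤ (‖Φ‖ + 1) * ‖star (Δ m) * b * Δ m‖ := by nlinarith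
    have h5 : (‖Φ‖ + 1) * ‖star (Δ m) * b * Δ m‖ ≤ (‖Φ‖ + 1) * (ε / (4 * (‖Φ‖ + 1))) := by
      nlinarith
    have h6 : (‖Φ‖ + 1) * (ε / (4 * (‖Φ‖ + 1))) = ε / 4 := by field_simp
    linarith
  calc ‖star (π (Δ n)) * (Φ a - π a) * π (Δ n)‖
      = ‖star (π (Δ n)) * (Φ b) * π (Δ n) - π (star (Δ n) * b * Δ n)‖ := by rw [hdiff n]
    _ ≤ ‖star (π (Δ n)) * (Φ b) * π (Δ n)‖ + ‖π (star (Δ n) * b * Δ n)‖ := norm_sub_le _ _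
    _ ≤ (2 * ‖b‖ * Real.sqrt (2 * ‖star (Δ n) * (1 - Δ m) * Δ n‖)
          + ‖Φ‖ * ‖star (Δ m) * b * Δ m‖) + ‖star (Δ n) * b * Δ n‖ := by
        have := main m n
        have := hπc (star (Δ n) * b * Δ n)
        linarith
    _ < ε := by linarith
end

section
/- Let A be a unital C*-algebra and let S ⊂ A be an operator system. Let π : A → B(H) be a unital *-representation and let Π : A → B(H) be a unital completely positive map which agrees with π on S. Let ψ be a state on A which admits a characteristic sequence (Δ_n) with Δ_n ∈ S for all n, and let (σ_ψ, H_ψ, ξ_ψ) be a GNS triple for ψ. Then for every a ∈ A, limsup_{n→∞} ‖(Π(a) − π(a)) π(Δ_n)‖ ≤ 2 · dist(σ_ψ(a), σ_ψ(S)) = 2 · inf{‖σ_ψ(a − s)‖ : s ∈ S}. -/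
open Filter Topology
open scoped ComplexOrder InnerProductSpace

namespace Stmt13Aux
open ComplexConjugate
set_option linter.unusedSectionVars false
set_option maxHeartbeats 1000000

variable {A : Type*} [CStarAlgebra A]
variable {H : Type*} [NormedAddCommGroup H] [InnerProductSpace ℂ H] [CompleteSpace H]
variable {Φ : A →L[ℂ] (H →L[ℂ] H)}

lemma pos2' (hΦ : IsUCP Φ) (x y : A) (h k : H) :
    0 ≤ ⟪h, Φ (star x * x) h⟫_ℂ + ⟪h, Φ (star x * y) k⟫_ℂ
      + ⟪k, Φ (star y * x) h⟫_ℂ + ⟪k, Φ (star y * y) k⟫_ℂ := by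
  classical
  set z : Fin 2 → A := ![x, y] with hz
  set N : Matrix (Fin 2) (Fin 2) A := Matrix.of fun i j => if i = 0 then z j else 0 with hN
  set M : Matrix (Fin 2) (Fin 2) A := Matrix.of fun i j => star (z i) * z j with hM
  have hMN : M = N.conjTranspose * N := by
    ext i j
    simp [hM, hN, Matrix.mul_apply, Matrix.conjTranspose_apply, Fin.sum_univ_two]
  have key := hΦ.2 2 M ⟨N, hMN⟩ ![h, k]
  simp only [Fin.sum_univ_two, hM, Matrix.of_apply, hz, Matrix.cons_val_zero,
    Matrix.cons_val_one, Matrix.head_cons] at key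
  convert key using 1
  ring

lemma pos1' (hΦ : IsUCP Φ) (x : A) (h : H) :
    0 ≤ ⟪h, Φ (star x * x) h⟫_ℂ := by
  have := pos2' hΦ x 0 h 0
  simpa using this

lemma im_eq_zero_of_nonneg {z : ℂ} (hz : 0 ≤ z) : z.im = 0 :=
  ((Complex.le_def.mp hz).2).symm

lemma re_nonneg_of_nonneg {z : ℂ} (hz : 0 ≤ z) : 0 ≤ z.re :=
  (Complex.le_def.mp hz).1

lemma inner_self_im' (h : H) : (⟪h, h⟫_ℂ).im = 0 := by
  exact inner_self_im (𝕜 := ℂ) h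

lemma herm (hΦ : IsUCP Φ) (x : A) (h k : H) :
    ⟪k, Φ (star x) h⟫_ℂ = conj ⟪h, Φ x k⟫_ℂ := by
  have e1 := pos2' hΦ 1 x h k
  have e2 := pos2' hΦ 1 x h (Complex.I • k)
  simp only [star_one, one_mul, mul_one, hΦ.1, ContinuousLinearMap.one_apply] at e1 e2
  have t2 : ⟪h, Φ x (Complex.I • k)⟫_ℂ = Complex.I * ⟪h, Φ x k⟫_ℂ := by
    rw [ContinuousLinearMap.map_smul, inner_smul_right]
  have t3 : ⟪Complex.I • k, Φ (star x) h⟫_ℂ = -(Complex.I * ⟪k, Φ (star x) h⟫_ℂ) := by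
    rw [inner_smul_left]; simp [Complex.conj_I]
  have t4 : ⟪Complex.I • k, Φ (star x * x) (Complex.I • k)⟫_ℂ
      = ⟪k, Φ (star x * x) k⟫_ℂ := by
    rw [ContinuousLinearMap.map_smul, inner_smul_right, inner_smul_left]
    simp [Complex.conj_I, ← mul_assoc, Complex.I_mul_I]
  rw [t2, t3, t4] at e2
  have hqim : (⟪k, Φ (star x * x) k⟫_ℂ).im = 0 := im_eq_zero_of_nonneg (pos1' hΦ x k)
  have hselfim : (⟪h, h⟫_ℂ).im = 0 := inner_self_im' h
  have i1 := im_eq_zero_of_nonneg e1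
  have i2 := im_eq_zero_of_nonneg e2
  simp only [Complex.add_im, Complex.mul_im, Complex.neg_im, Complex.I_re, Complex.I_im,
    hselfim, hqim, zero_mul, one_mul, mul_zero, mul_one, zero_add, add_zero] at i1 i2
  apply Complex.ext
  · simp only [Complex.conj_re]; linarith
  · simp only [Complex.conj_im]; linarith

lemma quadratic_le {p q z : ℝ} (hq : 0 ≤ q) (hz : 0 ≤ z)
    (Hr : ∀ r : ℝ, 0 ≤ r → 0 ≤ p - 2*r*z + r^2*z*q) : z ≤ p*q := by
  have hp : 0 ≤ p := by simpa using Hr 0 le_rfl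
  rcases hq.eq_or_lt with hq0 | hq0
  · rcases hz.eq_or_lt with hz0 | hz0
    · nlinarith
    · exfalso
      have h1 := Hr ((p+1)/(2*z)) (by positivity)
      rw [← hq0] at h1
      have h2 : 2*((p+1)/(2*z))*z = p + 1 := by field_simp
      nlinarith
  · have h1 := Hr (1/q) (by positivity)
    have h2 : (1/q)^2*z*q = z/q := by field_simp
    rw [h2] at h1
    have h3 : 2*(1/q)*z = 2*(z/q) := by ring
    rw [h3] at h1
    have h4 : z/q ≤ p := by linarith
    calc z = (z/q)*q := by field_simp
    _ ≤ p*q := by exact mul_le_mul_of_nonneg_right h4 hq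

lemma cs_sq (hΦ : IsUCP Φ) (x y : A) (h k : H) :
    ‖⟪h, Φ (star x * y) k⟫_ℂ‖^2
      ≤ (⟪h, Φ (star x * x) h⟫_ℂ).re * (⟪k, Φ (star y * y) k⟫_ℂ).re := by
  set z := ⟪h, Φ (star x * y) k⟫_ℂ with hzdef
  have hq : 0 ≤ (⟪k, Φ (star y * y) k⟫_ℂ).re := re_nonneg_of_nonneg (pos1' hΦ y k)
  have habs : 0 ≤ ‖z‖ ^ 2 := by positivity
  refine quadratic_le hq habs fun r hr => ?_
  set t : ℂ := -(conj z) * (r : ℂ) with htdef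
  have hyx : ⟪k, Φ (star y * x) h⟫_ℂ = conj z := by
    have := herm hΦ (star x * y) h k
    rwa [star_mul, star_star] at this
  have e := pos2' hΦ x y h (t • k)
  have tzval : t * z = ((-(r * Complex.normSq z) : ℝ) : ℂ) := by
    calc t * z = -((r : ℂ) * ((starRingEnd ℂ) z * z)) := by rw [htdef]; ring
    _ = -((r : ℂ) * ((Complex.normSq z : ℝ) : ℂ)) := by rw [← Complex.normSq_eq_conj_mul_self]
    _ = ((-(r * Complex.normSq z) : ℝ) : ℂ) := by push_cast; ring
  have t2 : ⟪h, Φ (star x * y) (t • k)⟫_ℂ = ((-(r * Complex.normSq z) : ℝ) : ℂ) := by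
    rw [ContinuousLinearMap.map_smul, inner_smul_right, ← hzdef, tzval]
  have t3 : ⟪t • k, Φ (star y * x) h⟫_ℂ = ((-(r * Complex.normSq z) : ℝ) : ℂ) := by
    rw [inner_smul_left, hyx, htdef]
    simp only [map_mul, map_neg, Complex.conj_conj, Complex.conj_ofReal]
    calc -z * (r : ℂ) * (starRingEnd ℂ) z = -((r : ℂ) * ((starRingEnd ℂ) z * z)) := by ring
    _ = -((r : ℂ) * ((Complex.normSq z : ℝ) : ℂ)) := by rw [← Complex.normSq_eq_conj_mul_self]
    _ = ((-(r * Complex.normSq z) : ℝ) : ℂ) := by push_cast; ring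
  have t4 : ⟪t • k, Φ (star y * y) (t • k)⟫_ℂ
      = ((Complex.normSq z * r^2 : ℝ) : ℂ) * ⟪k, Φ (star y * y) k⟫_ℂ := by
    rw [ContinuousLinearMap.map_smul, inner_smul_right, inner_smul_left, ← mul_assoc,
      Complex.mul_conj]
    norm_cast
    rw [htdef]
    simp only [Complex.normSq_mul, Complex.normSq_neg, Complex.normSq_conj,
      Complex.normSq_ofReal]
    ring_nf
  rw [t2, t3, t4] at e
  have hre := re_nonneg_of_nonneg e
  simp only [Complex.add_re, Complex.ofReal_re, Complex.re_ofReal_mul] at hre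
  rw [Complex.sq_norm]
  nlinarith [hre]

lemma inner_self_re' (w : H) : (⟪w, w⟫_ℂ).re = ‖w‖^2 :=
  inner_self_eq_norm_sq (𝕜 := ℂ) w

lemma smul_inner_Φ (c : A) (h k : H) (s u : ℝ) :
    ⟪(s:ℂ) • h, Φ c ((u:ℂ) • k)⟫_ℂ = ((s*u : ℝ):ℂ) * ⟪h, Φ c k⟫_ℂ := by
  rw [ContinuousLinearMap.map_smul, inner_smul_right, inner_smul_left, Complex.conj_ofReal]
  push_cast; ring

lemma posR (hΦ : IsUCP Φ) (x y : A) (h k : H) (t₁ t₂ : ℝ) :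
    0 ≤ t₁^2 * (⟪h, Φ (star x * x) h⟫_ℂ).re + 2*t₁*t₂*(⟪h, Φ (star x * y) k⟫_ℂ).re
      + t₂^2 * (⟪k, Φ (star y * y) k⟫_ℂ).re := by
  have e := pos2' hΦ x y ((t₁:ℂ) • h) ((t₂:ℂ) • k)
  rw [smul_inner_Φ, smul_inner_Φ, smul_inner_Φ, smul_inner_Φ] at e
  have hre := re_nonneg_of_nonneg e
  simp only [Complex.add_re, Complex.re_ofReal_mul] at hre
  have hconj : (⟪k, Φ (star y * x) h⟫_ℂ).re = (⟪h, Φ (star x * y) k⟫_ℂ).re := by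
    have := herm hΦ (star x * y) h k
    rw [star_mul, star_star] at this
    rw [this, Complex.conj_re]
  rw [hconj] at hre
  nlinarith [hre]

lemma exists_sq (e : A) :
    ∃ d : A, IsSelfAdjoint d ∧
      (‖star e * e‖ : ℂ) • (1 : A) - star e * e = d * d := by
  rcases subsingleton_or_nontrivial A with hA | hA
  · exact ⟨0, IsSelfAdjoint.zero A, Subsingleton.elim _ _⟩
  set c := star e * e with hcdef
  have hsa : IsSelfAdjoint c := IsSelfAdjoint.star_mul_self e
  set f : ℝ → ℝ := fun x => Real.sqrt (‖c‖ - x) with hfdef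
  refine ⟨cfc f c, cfc_predicate f c, ?_⟩
  rw [← cfc_mul f f c]
  have hsp : ∀ x ∈ spectrum ℝ c, f x * f x = ‖c‖ - x := by
    intro x hx
    have hb : ‖x‖ ≤ ‖c‖ := spectrum.norm_le_norm_of_mem hx
    have : x ≤ ‖c‖ := (le_abs_self x).trans (by rwa [← Real.norm_eq_abs])
    simp only [hfdef]
    exact Real.mul_self_sqrt (by linarith)
  rw [cfc_congr (g := fun x : ℝ => (fun _ : ℝ => ‖c‖) x - (fun y : ℝ => y) x) hsp]
  have key : algebraMap ℝ A ‖c‖ = (‖c‖ : ℂ) • (1 : A) := by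
    rw [IsScalarTower.algebraMap_apply ℝ ℂ A, Algebra.algebraMap_eq_smul_one]
    norm_cast
  rw [cfc_sub (fun _ : ℝ => ‖c‖) (fun y : ℝ => y) c, cfc_const ‖c‖ c, cfc_id' ℝ c, key]

lemma bound2 (hΦ : IsUCP Φ) (e : A) (x y : A) (h k : H) :
    (⟪h, Φ (star x * ((star e * e) * x)) h⟫_ℂ + ⟪h, Φ (star x * ((star e * e) * y)) k⟫_ℂ
      + ⟪k, Φ (star y * ((star e * e) * x)) h⟫_ℂ
      + ⟪k, Φ (star y * ((star e * e) * y)) k⟫_ℂ).re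
    ≤ ‖star e * e‖ * (⟪h, Φ (star x * x) h⟫_ℂ + ⟪h, Φ (star x * y) k⟫_ℂ
      + ⟪k, Φ (star y * x) h⟫_ℂ + ⟪k, Φ (star y * y) k⟫_ℂ).re := by
  obtain ⟨d, hdsa, hd⟩ := exists_sq e
  set c := star e * e with hcdef
  have key : ∀ u w : A, star (d*u) * (d*w)
      = (‖c‖:ℂ) • (star u * w) - star u * (c * w) := by
    intro u w
    have h1 : star (d*u) * (d*w) = star u * ((d * d) * w) := by
      rw [star_mul, hdsa.star_eq]
      noncomm_ring
    rw [h1, ← hd, sub_mul, smul_mul_assoc, one_mul, mul_sub, mul_smul_comm]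
  have e2 := pos2' hΦ (d*x) (d*y) h k
  rw [key x x, key x y, key y x, key y y] at e2
  simp only [map_sub, map_smul, ContinuousLinearMap.sub_apply,
    ContinuousLinearMap.smul_apply, inner_sub_right, inner_smul_right] at e2
  have hre := re_nonneg_of_nonneg e2
  simp only [Complex.add_re, Complex.sub_re, Complex.re_ofReal_mul] at hre
  simp only [Complex.add_re, Complex.sub_re, Complex.re_ofReal_mul]
  linarith

lemma bound1 (hΦ : IsUCP Φ) (e : A) (x : A) (h : H) :
    (⟪h, Φ (star x * ((star e * e) * x)) h⟫_ℂ).re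
      ≤ ‖star e * e‖ * (⟪h, Φ (star x * x) h⟫_ℂ).re := by
  have := bound2 hΦ e x 0 h 0
  simpa using this

lemma ks (hΦ : IsUCP Φ) (b : A) (h : H) :
    ‖Φ b h‖^2 ≤ (⟪h, Φ (star b * b) h⟫_ℂ).re := by
  have e := pos2' hΦ 1 b (-(Φ b h)) h
  simp only [star_one, one_mul, mul_one, hΦ.1, ContinuousLinearMap.one_apply] at e
  have t3 : ⟪h, Φ (star b) (-(Φ b h))⟫_ℂ = -(⟪Φ b h, Φ b h⟫_ℂ) := by
    have hh := herm hΦ b (-(Φ b h)) h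
    rw [hh, inner_neg_left, map_neg]
    congr 1
    rw [← inner_conj_symm]
    simp
  rw [t3, inner_neg_neg, inner_neg_left] at e
  have hre := re_nonneg_of_nonneg e
  simp only [Complex.add_re, Complex.neg_re, inner_self_re'] at hre
  linarith

lemma sqle {x y : ℝ} (hx : 0 ≤ x) (hy : 0 ≤ y) (h : x^2 ≤ y^2) : x ≤ y := by
  nlinarith

lemma formC (hΦ : IsUCP Φ) (b : A) (h' : H) :
    (⟪h', Φ (star b * b) h'⟫_ℂ).re ≤ ‖star b * b‖ * ‖h'‖^2 := by
  have h1 := bound1 hΦ b 1 h'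
  simp only [star_one, one_mul, mul_one, hΦ.1, ContinuousLinearMap.one_apply] at h1
  rwa [inner_self_re'] at h1

lemma crossC (hΦ : IsUCP Φ) (b : A) (h' k' : H) :
    |(⟪h', Φ (star b * b) k'⟫_ℂ).re| ≤ ‖star b * b‖ * (‖h'‖ * ‖k'‖) := by
  set κ := ‖star b * b‖ with hκ
  have hκ0 : 0 ≤ κ := norm_nonneg _
  have h1 := cs_sq hΦ b b h' k'
  have h2 := formC hΦ b h'
  have h3 := formC hΦ b k'
  have hp : 0 ≤ (⟪h', Φ (star b * b) h'⟫_ℂ).re := re_nonneg_of_nonneg (pos1' hΦ b h')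
  have hq : 0 ≤ (⟪k', Φ (star b * b) k'⟫_ℂ).re := re_nonneg_of_nonneg (pos1' hΦ b k')
  have h4 : ‖⟪h', Φ (star b * b) k'⟫_ℂ‖^2 ≤ (κ * (‖h'‖ * ‖k'‖))^2 := by
    calc ‖⟪h', Φ (star b * b) k'⟫_ℂ‖^2
        ≤ (⟪h', Φ (star b * b) h'⟫_ℂ).re * (⟪k', Φ (star b * b) k'⟫_ℂ).re := h1
    _ ≤ (κ * ‖h'‖^2) * (κ * ‖k'‖^2) := by nlinarith [norm_nonneg h', norm_nonneg k']
    _ = (κ * (‖h'‖ * ‖k'‖))^2 := by ring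
  have h5 : ‖⟪h', Φ (star b * b) k'⟫_ℂ‖ ≤ κ * (‖h'‖ * ‖k'‖) :=
    sqle (norm_nonneg _) (by positivity) h4
  exact (Complex.abs_re_le_norm _).trans h5

lemma perN (hΦ : IsUCP Φ) {π : A →⋆ₐ[ℂ] (H →L[ℂ] H)} (hπle : ∀ x : A, ‖π x‖ ≤ ‖x‖)
    (b dm dn : A) (hdm1 : ‖dm‖ = 1) (hdn1 : ‖dn‖ = 1)
    (hΦm : Φ dm = π dm)
    {t ρ γbar : ℝ} (ht : 0 < t)
    (hγ : ‖star dm * (star b * b * dm)‖ ≤ γbar)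
    (hρ : ‖(1 - dm) * dn‖ ≤ ρ) (u : H) :
    ‖(Φ b * π dn) u‖^2
      ≤ ((1+t)*γbar + ((1+1/t)*(2*‖star b * b‖) + 2*‖star b * b‖)*ρ) * ‖u‖^2 := by
  have hκ0 : (0:ℝ) ≤ ‖star b * b‖ := norm_nonneg _
  have hρ0 : 0 ≤ ρ := (norm_nonneg _).trans hρ
  have hγ0 : 0 ≤ γbar := (norm_nonneg _).trans hγ
  set v := π dn u with hv
  set w := π dm v with hw
  have happ : (Φ b * π dn) u = Φ b v := rfl
  -- norm facts
  have hvu : ‖v‖ ≤ ‖u‖ := by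
    calc ‖π dn u‖ ≤ ‖π dn‖ * ‖u‖ := (π dn).le_opNorm u
    _ ≤ 1 * ‖u‖ := by
        apply mul_le_mul_of_nonneg_right _ (norm_nonneg u)
        rw [← hdn1]; exact hπle dn
    _ = ‖u‖ := one_mul _
  have hwv : ‖w‖ ≤ ‖v‖ := by
    calc ‖π dm v‖ ≤ ‖π dm‖ * ‖v‖ := (π dm).le_opNorm v
    _ ≤ 1 * ‖v‖ := by
        apply mul_le_mul_of_nonneg_right _ (norm_nonneg v)
        rw [← hdm1]; exact hπle dm
    _ = ‖v‖ := one_mul _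
  have hwu : ‖w‖ ≤ ‖u‖ := hwv.trans hvu
  have hvw : ‖v - w‖ ≤ ρ * ‖u‖ := by
    have hvwe : v - w = (π ((1 - dm) * dn)) u := by
      rw [map_mul, map_sub, map_one, sub_mul, one_mul, ContinuousLinearMap.sub_apply,
        ContinuousLinearMap.mul_apply]
    rw [hvwe]
    calc ‖(π ((1 - dm) * dn)) u‖ ≤ ‖π ((1 - dm) * dn)‖ * ‖u‖ :=
          (π ((1 - dm) * dn)).le_opNorm u
    _ ≤ ρ * ‖u‖ := mul_le_mul_of_nonneg_right ((hπle _).trans hρ) (norm_nonneg u)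
  -- Kadison-Schwarz
  have e1 : ‖Φ b v‖^2 ≤ (⟪v, Φ (star b * b) v⟫_ℂ).re := ks hΦ b v
  -- replace v by w in the quadratic form
  have decomp : ⟪v, Φ (star b * b) v⟫_ℂ = ⟪v - w, Φ (star b * b) v⟫_ℂ
      + ⟪w, Φ (star b * b) (v - w)⟫_ℂ + ⟪w, Φ (star b * b) w⟫_ℂ := by
    rw [ContinuousLinearMap.map_sub, inner_sub_right, inner_sub_left]
    ring
  have e2 : (⟪v, Φ (star b * b) v⟫_ℂ).re ≤ (⟪w, Φ (star b * b) w⟫_ℂ).re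
      + ‖star b * b‖*(‖v-w‖*‖v‖) + ‖star b * b‖*(‖w‖*‖v-w‖) := by
    have c1 := crossC hΦ b (v-w) v
    have c2 := crossC hΦ b w (v-w)
    rw [decomp, Complex.add_re, Complex.add_re]
    have l1 : (⟪v - w, Φ (star b * b) v⟫_ℂ).re ≤ ‖star b * b‖*(‖v-w‖*‖v‖) :=
      (le_abs_self _).trans c1
    have l2 : (⟪w, Φ (star b * b) (v-w)⟫_ℂ).re ≤ ‖star b * b‖*(‖w‖*‖v-w‖) :=
      (le_abs_self _).trans c2
    linarith
  -- algebraic identities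
  have hassoc2 : star (b * dm) * (b * dm) = star dm * (star b * b * dm) := by
    rw [star_mul, mul_assoc, ← mul_assoc (star b) b dm]
  have hstar3 : star (star b * b * dm) = star dm * (star b * b) := by
    rw [star_mul, star_mul, star_star]
  -- gram inequality (iii)
  have posq := posR hΦ b (b*dm) w v 1 (-(t+1))
  rw [← mul_assoc (star b) b dm] at posq
  rw [hassoc2] at posq
  have posq' : 0 ≤ (⟪w, Φ (star b * b) w⟫_ℂ).re
      - 2*(t+1)*(⟪w, Φ (star b * b * dm) v⟫_ℂ).re
      + (t+1)^2*(⟪v, Φ (star dm * (star b * b * dm)) v⟫_ℂ).re := by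
    have : 1^2 * (⟪w, Φ (star b * b) w⟫_ℂ).re
        + 2*1*(-(t+1))*(⟪w, Φ (star b * b * dm) v⟫_ℂ).re
        + (-(t+1))^2*(⟪v, Φ (star dm * (star b * b * dm)) v⟫_ℂ).re
        = (⟪w, Φ (star b * b) w⟫_ℂ).re
        - 2*(t+1)*(⟪w, Φ (star b * b * dm) v⟫_ℂ).re
        + (t+1)^2*(⟪v, Φ (star dm * (star b * b * dm)) v⟫_ℂ).re := by ring
    rw [← this]
    exact posq
  have e3 : (⟪w, Φ (star b * b) w⟫_ℂ).re
      ≤ (1+t)*(⟪v, Φ (star dm * (star b * b * dm)) v⟫_ℂ).re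
      + (1+1/t)*((⟪w, Φ (star b * b) w⟫_ℂ).re
          - 2*(⟪w, Φ (star b * b * dm) v⟫_ℂ).re
          + (⟪v, Φ (star dm * (star b * b * dm)) v⟫_ℂ).re) := by
    have hkey : t * ((1+t)*(⟪v, Φ (star dm * (star b * b * dm)) v⟫_ℂ).re
        + (1+1/t)*((⟪w, Φ (star b * b) w⟫_ℂ).re
          - 2*(⟪w, Φ (star b * b * dm) v⟫_ℂ).re
          + (⟪v, Φ (star dm * (star b * b * dm)) v⟫_ℂ).re))
        - t * (⟪w, Φ (star b * b) w⟫_ℂ).re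
        = (⟪w, Φ (star b * b) w⟫_ℂ).re
        - 2*(t+1)*(⟪w, Φ (star b * b * dm) v⟫_ℂ).re
        + (t+1)^2*(⟪v, Φ (star dm * (star b * b * dm)) v⟫_ℂ).re := by
      field_simp
      ring
    have h2 : t * (⟪w, Φ (star b * b) w⟫_ℂ).re
        ≤ t * ((1+t)*(⟪v, Φ (star dm * (star b * b * dm)) v⟫_ℂ).re
        + (1+1/t)*((⟪w, Φ (star b * b) w⟫_ℂ).re
          - 2*(⟪w, Φ (star b * b * dm) v⟫_ℂ).re
          + (⟪v, Φ (star dm * (star b * b * dm)) v⟫_ℂ).re)) := by linarith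
    exact le_of_mul_le_mul_left h2 ht
  -- term identifications for bound2
  have E3 : (⟪v, Φ (star dm * (star b * b)) w⟫_ℂ).re
      = (⟪w, Φ (star b * b * dm) v⟫_ℂ).re := by
    have hh := herm hΦ (star b * b * dm) w v
    rw [hstar3] at hh
    rw [hh, Complex.conj_re]
  have E5 : (⟪w, Φ dm v⟫_ℂ).re = ‖w‖^2 := by
    rw [hΦm, ← hw, inner_self_re']
  have E6 : (⟪v, Φ (star dm) w⟫_ℂ).re = ‖w‖^2 := by
    have hh := herm hΦ dm w v
    rw [hh, Complex.conj_re, hΦm, ← hw, inner_self_re']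
  have A6 : (⟪v, Φ (star dm * dm) v⟫_ℂ).re ≤ ‖v‖^2 := by
    have h6 := bound1 hΦ dm 1 v
    simp only [star_one, one_mul, mul_one, hΦ.1, ContinuousLinearMap.one_apply] at h6
    rw [inner_self_re'] at h6
    calc (⟪v, Φ (star dm * dm) v⟫_ℂ).re ≤ ‖star dm * dm‖ * ‖v‖^2 := h6
    _ = ‖v‖^2 := by rw [CStarRing.norm_star_mul_self, hdm1, one_mul, one_mul]
  -- bound2 estimate
  have hDq : (⟪w, Φ (star b * b) w⟫_ℂ).re
      - 2*(⟪w, Φ (star b * b * dm) v⟫_ℂ).re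
      + (⟪v, Φ (star dm * (star b * b * dm)) v⟫_ℂ).re
      ≤ ‖star b * b‖ * (‖v‖^2 - ‖w‖^2) := by
    have b2 := bound2 hΦ b 1 dm w (-v)
    simp only [star_one, one_mul, mul_one, hΦ.1, ContinuousLinearMap.one_apply,
      inner_neg_left, inner_neg_right, ContinuousLinearMap.map_neg, neg_neg,
      Complex.add_re, Complex.neg_re] at b2
    rw [E3, E5, E6, inner_self_re'] at b2
    have b3 := b2.trans (mul_le_mul_of_nonneg_left
      (show _ ≤ ‖v‖^2 - ‖w‖^2 by linarith [A6]) (norm_nonneg (star b * b)))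
    linarith [b3]
  -- bound γq
  have hγ2 : (⟪v, Φ (star dm * (star b * b * dm)) v⟫_ℂ).re ≤ γbar * ‖u‖^2 := by
    have h7 := bound1 hΦ (b*dm) 1 v
    simp only [star_one, one_mul, mul_one, hΦ.1, ContinuousLinearMap.one_apply] at h7
    rw [inner_self_re', hassoc2] at h7
    calc (⟪v, Φ (star dm * (star b * b * dm)) v⟫_ℂ).re
        ≤ ‖star dm * (star b * b * dm)‖ * ‖v‖^2 := h7
    _ ≤ γbar * ‖u‖^2 := by
        have h9 : ‖v‖^2 ≤ ‖u‖^2 := by nlinarith [norm_nonneg v, norm_nonneg u]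
        exact mul_le_mul hγ h9 (sq_nonneg _) hγ0
  -- final numeric assembly
  have hvw2 : ‖v‖^2 - ‖w‖^2 ≤ 2*ρ*‖u‖^2 := by
    have h10 : ‖v‖ - ‖w‖ ≤ ‖v - w‖ := norm_sub_norm_le v w
    nlinarith [norm_nonneg v, norm_nonneg w, norm_nonneg u, hvw]
  have ht1 : (0:ℝ) ≤ 1 + 1/t := by positivity
  rw [happ]
  have hDq2 : (⟪w, Φ (star b * b) w⟫_ℂ).re
      - 2*(⟪w, Φ (star b * b * dm) v⟫_ℂ).re
      + (⟪v, Φ (star dm * (star b * b * dm)) v⟫_ℂ).re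
      ≤ ‖star b * b‖*(2*ρ*‖u‖^2) :=
    hDq.trans (mul_le_mul_of_nonneg_left hvw2 hκ0)
  have step2 : ‖star b * b‖*(‖v-w‖*‖v‖) + ‖star b * b‖*(‖w‖*‖v-w‖)
      ≤ 2*‖star b * b‖*(ρ*‖u‖^2) := by
    have n1 : ‖v-w‖*‖v‖ ≤ (ρ*‖u‖)*‖u‖ :=
      mul_le_mul hvw hvu (norm_nonneg v) (by positivity)
    have n2 : ‖w‖*‖v-w‖ ≤ ‖u‖*(ρ*‖u‖) :=
      mul_le_mul hwu hvw (norm_nonneg _) (norm_nonneg u)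
    nlinarith [hκ0]
  have step3 : (⟪w, Φ (star b * b) w⟫_ℂ).re
      ≤ (1+t)*(γbar*‖u‖^2) + (1+1/t)*(‖star b * b‖*(2*ρ*‖u‖^2)) := by
    have m1 := mul_le_mul_of_nonneg_left hγ2 (show (0:ℝ) ≤ 1+t by positivity)
    have m2 := mul_le_mul_of_nonneg_left hDq2 ht1
    linarith [e3, m1, m2]
  have final : ‖Φ b v‖^2 ≤ (1+t)*(γbar*‖u‖^2)
      + (1+1/t)*(‖star b * b‖*(2*ρ*‖u‖^2)) + 2*‖star b * b‖*(ρ*‖u‖^2) := by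
    linarith [e1, e2, step2, step3]
  calc ‖Φ b v‖^2 ≤ (1+t)*(γbar*‖u‖^2)
      + (1+1/t)*(‖star b * b‖*(2*ρ*‖u‖^2)) + 2*‖star b * b‖*(ρ*‖u‖^2) := final
  _ = ((1+t)*γbar + ((1+1/t)*(2*‖star b * b‖) + 2*‖star b * b‖)*ρ) * ‖u‖^2 := by ring

section Psi
variable {ψ : A →L[ℂ] ℂ}

lemma state_pos_combo (hψ : IsState ψ) (y : A) (t : ℂ) :
    0 ≤ ψ 1 + t * ψ y + conj t * ψ (star y) + (conj t * t) * ψ (star y * y) := by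
  have e := hψ.2 (1 + t • y)
  have expand : star (1 + t • y) * (1 + t • y)
      = 1 + t • y + conj t • star y + (conj t * t) • (star y * y) := by
    rw [star_add, star_smul, star_one, Complex.star_def]
    rw [add_mul, mul_add, mul_add]
    simp only [one_mul, mul_one, smul_mul_smul_comm]
    abel
  rw [expand] at e
  simp only [map_add, ContinuousLinearMap.map_smul] at e
  simpa only [smul_eq_mul] using e

lemma psi_one_nonneg (hψ : IsState ψ) : 0 ≤ ψ 1 := by
  have := hψ.2 1
  simpa using this

lemma psi_star (hψ : IsState ψ) (y : A) : ψ (star y) = conj (ψ y) := by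
  have e1 := state_pos_combo hψ y 1
  have e2 := state_pos_combo hψ y Complex.I
  simp only [map_one, one_mul, mul_one, Complex.conj_I] at e1 e2
  have h1 : (ψ 1).im = 0 := im_eq_zero_of_nonneg (psi_one_nonneg hψ)
  have h4 : (ψ (star y * y)).im = 0 := im_eq_zero_of_nonneg (hψ.2 y)
  have i1 := im_eq_zero_of_nonneg e1
  have i2 := im_eq_zero_of_nonneg e2
  simp only [Complex.add_im, Complex.mul_im, Complex.neg_im, Complex.neg_re,
    Complex.I_re, Complex.I_im, h1, h4, zero_mul, one_mul, mul_zero, mul_one,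
    zero_add, add_zero, neg_zero, neg_neg] at i1 i2
  apply Complex.ext
  · simp only [Complex.conj_re]; linarith
  · simp only [Complex.conj_im]; linarith

lemma psi_cs (hψ : IsState ψ) (x : A) :
    ‖ψ x‖^2 ≤ (ψ 1).re * (ψ (star x * x)).re := by
  set z := ψ x with hz
  have hq : 0 ≤ (ψ (star x * x)).re := re_nonneg_of_nonneg (hψ.2 x)
  have habs : 0 ≤ ‖z‖ ^ 2 := by positivity
  refine quadratic_le hq habs fun r hr => ?_
  have e := state_pos_combo hψ x (-(conj z) * (r : ℂ))
  rw [psi_star hψ x] at e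
  have hre := re_nonneg_of_nonneg e
  have c1 : (-(conj z) * (r:ℂ)) * z = ((-(r * Complex.normSq z) : ℝ) : ℂ) := by
    calc (-(conj z) * (r:ℂ)) * z = -((r : ℂ) * ((starRingEnd ℂ) z * z)) := by ring
    _ = -((r : ℂ) * ((Complex.normSq z : ℝ) : ℂ)) := by rw [← Complex.normSq_eq_conj_mul_self]
    _ = ((-(r * Complex.normSq z) : ℝ) : ℂ) := by push_cast; ring
  have c2 : conj (-(conj z) * (r:ℂ)) * conj z = ((-(r * Complex.normSq z) : ℝ) : ℂ) := by
    calc conj (-(conj z) * (r:ℂ)) * conj z = conj ((-(conj z) * (r:ℂ)) * z) := by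
          rw [← map_mul]
    _ = ((-(r * Complex.normSq z) : ℝ) : ℂ) := by rw [c1, Complex.conj_ofReal]
  have c3 : conj (-(conj z) * (r:ℂ)) * (-(conj z) * (r:ℂ))
      = ((Complex.normSq z * r^2 : ℝ) : ℂ) := by
    rw [← Complex.normSq_eq_conj_mul_self]
    norm_cast
    simp only [Complex.normSq_mul, Complex.normSq_neg, Complex.normSq_conj,
      Complex.normSq_ofReal]
    ring
  rw [c1, c2, c3] at hre
  simp only [Complex.add_re, Complex.ofReal_re, Complex.re_ofReal_mul] at hre
  rw [Complex.sq_norm]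
  nlinarith [hre]

lemma psi_one (hψ : IsState ψ) : ψ 1 = 1 := by
  have h0 : 0 ≤ ψ 1 := psi_one_nonneg hψ
  have him : (ψ 1).im = 0 := im_eq_zero_of_nonneg h0
  have hre0 : 0 ≤ (ψ 1).re := re_nonneg_of_nonneg h0
  have hnt : Nontrivial A := by
    by_contra hcon
    rw [not_nontrivial_iff_subsingleton] at hcon
    have : (1 : A) = 0 := Subsingleton.elim _ _
    have : ψ 1 = 0 := by rw [this, map_zero]
    have hb : ‖ψ‖ ≤ 0 := by
      refine ContinuousLinearMap.opNorm_le_bound _ le_rfl fun x => ?_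
      have : x = 0 := Subsingleton.elim _ _
      simp [this]
    rw [hψ.1] at hb; linarith
  -- upper bound
  have hup : (ψ 1).re ≤ 1 := by
    have := ψ.le_opNorm 1
    rw [hψ.1, norm_one, one_mul] at this
    calc (ψ 1).re ≤ ‖ψ 1‖ := Complex.re_le_norm _
    _ ≤ 1 := this
  -- lower bound via norm
  have hlow : 1 ≤ (ψ 1).re := by
    have hb : ‖ψ‖ ≤ Real.sqrt ((ψ 1).re) := by
      refine ContinuousLinearMap.opNorm_le_bound _ (Real.sqrt_nonneg _) fun x => ?_
      have h1 := psi_cs hψ x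
      have h2 : (ψ (star x * x)).re ≤ ‖x‖^2 := by
        calc (ψ (star x * x)).re ≤ ‖ψ (star x * x)‖ := Complex.re_le_norm _
        _ ≤ ‖ψ‖ * ‖star x * x‖ := by exact ψ.le_opNorm _
        _ = ‖x‖^2 := by rw [hψ.1, one_mul, CStarRing.norm_star_mul_self]; ring
      have h3 : ‖ψ x‖^2 ≤ (ψ 1).re * ‖x‖^2 := by
        calc ‖ψ x‖^2 ≤ (ψ 1).re * (ψ (star x * x)).re := h1
        _ ≤ (ψ 1).re * ‖x‖^2 := by nlinarith [hre0]
      have h4 : ‖ψ x‖ = Real.sqrt (‖ψ x‖^2) := by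
        rw [Real.sqrt_sq (norm_nonneg _)]
      rw [h4]
      calc Real.sqrt (‖ψ x‖^2) ≤ Real.sqrt ((ψ 1).re * ‖x‖^2) :=
            Real.sqrt_le_sqrt h3
      _ = Real.sqrt ((ψ 1).re) * ‖x‖ := by
            rw [Real.sqrt_mul hre0, Real.sqrt_sq (norm_nonneg _)]
    rw [hψ.1] at hb
    nlinarith [Real.sq_sqrt hre0, Real.sqrt_nonneg ((ψ 1).re)]
  apply Complex.ext
  · simp; linarith
  · simp [him]

lemma psi_abs_re {x : A} (hψ : IsState ψ) :
    ‖ψ (star x * x)‖ = (ψ (star x * x)).re := by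
  have h := hψ.2 x
  rw [Complex.norm_def, Complex.normSq_apply, im_eq_zero_of_nonneg h]
  simp only [mul_zero, add_zero]
  exact Real.sqrt_mul_self (re_nonneg_of_nonneg h)

lemma psi_norm_le (hψ : IsState ψ) (x : A) : ‖ψ x‖ ≤ ‖x‖ := by
  have := ψ.le_opNorm x
  rwa [hψ.1, one_mul] at this

lemma beta_bound (hψ : IsState ψ) {d : A} (hnorm : ‖d‖ = 1) :
    ‖ψ (star (1 - d) * (1 - d))‖ ≤ 2*(1 - (ψ d).re) := by
  rw [psi_abs_re hψ]
  have expand : star (1 - d) * (1 - d) = 1 - d - star d + star d * d := by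
    rw [star_sub, star_one, sub_mul, mul_sub, mul_sub]
    simp only [one_mul, mul_one]
    abel
  rw [expand]
  simp only [map_add, map_sub, psi_one hψ, psi_star hψ d, Complex.add_re, Complex.sub_re,
    Complex.one_re, Complex.conj_re]
  have h2 : (ψ (star d * d)).re ≤ 1 := by
    calc (ψ (star d * d)).re ≤ ‖ψ (star d * d)‖ := Complex.re_le_norm _
    _ ≤ ‖star d * d‖ := psi_norm_le hψ _
    _ = 1 := by rw [CStarRing.norm_star_mul_self, hnorm, one_mul]
  linarith

end Psi

end Stmt13Aux

set_option maxHeartbeats 2000000 in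
open Stmt13Aux in
/-- with `π`, `Φ`, `ψ`, `(Δ n)` as in the local hyperrigidity setup and
`(σ, Hσ, ξσ)` a GNS triple for `ψ`, for every `a ∈ A` one has
`limsup ‖(Φ a - π a) * π (Δ n)‖ ≤ 2 ⬝ dist(σ a, σ(S))`. -/
theorem stmt13 {A : Type*} [CStarAlgebra A]
    {H : Type*} [NormedAddCommGroup H] [InnerProductSpace ℂ H] [CompleteSpace H]
    (S : Submodule ℂ A) (hS1 : (1 : A) ∈ S) (hSstar : ∀ x ∈ S, star x ∈ S)
    (π : A →⋆ₐ[ℂ] (H →L[ℂ] H)) (Φ : A →L[ℂ] (H →L[ℂ] H)) (hΦ : IsUCP Φ)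
    (hagree : ∀ s ∈ S, Φ s = π s)
    (ψ : A →L[ℂ] ℂ) (hψ : IsState ψ) (Δ : ℕ → A)
    (hΔ : IsCharacteristicSequence ψ Δ) (hΔS : ∀ n, Δ n ∈ S)
    (Hψ : Type*) [NormedAddCommGroup Hψ] [InnerProductSpace ℂ Hψ] [CompleteSpace Hψ]
    (σ : A →⋆ₐ[ℂ] (Hψ →L[ℂ] Hψ)) (ξ : Hψ) (hξ : ‖ξ‖ = 1)
    (hcyclic : Dense (Set.range fun a : A => σ a ξ))
    (hGNS : ∀ a : A, ψ a = ⟪ξ, σ a ξ⟫_ℂ) :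
    ∀ a : A,
      limsup (fun n => ‖(Φ a - π a) * π (Δ n)‖) atTop ≤
        2 * Metric.infDist (σ a) ((fun s => σ s) '' (S : Set A)) ∧
      Metric.infDist (σ a) ((fun s => σ s) '' (S : Set A)) =
        sInf {r : ℝ | ∃ s ∈ S, r = ‖σ (a - s)‖} := by
  intro a
  -- Part 2: the `sInf` description of the distance.
  have heq : Metric.infDist (σ a) ((fun s => σ s) '' (S : Set A))
      = sInf {r : ℝ | ∃ s ∈ S, r = ‖σ (a - s)‖} := by
    rw [Metric.infDist_eq_iInf, ← sInf_image']
    congr 1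
    ext r
    constructor
    · rintro ⟨y, ⟨s, hs, rfl⟩, rfl⟩
      exact ⟨s, hs, by rw [dist_eq_norm, map_sub]⟩
    · rintro ⟨s, hs, rfl⟩
      exact ⟨σ s, ⟨s, hs, rfl⟩, by rw [dist_eq_norm, map_sub]⟩
  have hπle : ∀ x : A, ‖π x‖ ≤ ‖x‖ := fun x => NonUnitalStarAlgHom.norm_apply_le π x
  -- Main estimate, for each fixed `s ∈ S`.
  have main : ∀ s ∈ S, limsup (fun n => ‖(Φ a - π a) * π (Δ n)‖) atTop
      ≤ 2 * dist (σ a) (σ s) := by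
    intro s hs
    set b := a - s with hb
    set K := (ψ (star b * b)).re with hK
    have hK0 : 0 ≤ K := re_nonneg_of_nonneg (hψ.2 b)
    have hKd : Real.sqrt K ≤ dist (σ a) (σ s) := by
      have h1 : ψ (star b * b) = ⟪σ b ξ, σ b ξ⟫_ℂ := by
        rw [hGNS (star b * b), map_mul, map_star, ContinuousLinearMap.mul_apply,
          ContinuousLinearMap.star_eq_adjoint, ContinuousLinearMap.adjoint_inner_right]
      have h2 : K = ‖σ b ξ‖^2 := by rw [hK, h1, inner_self_re']
      rw [h2, Real.sqrt_sq (norm_nonneg _)]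
      calc ‖σ b ξ‖ ≤ ‖σ b‖ * ‖ξ‖ := (σ b).le_opNorm ξ
      _ = ‖σ b‖ := by rw [hξ, mul_one]
      _ = dist (σ a) (σ s) := by rw [dist_eq_norm, ← map_sub]
    have hsplit : ∀ n, ‖(Φ a - π a) * π (Δ n)‖
        ≤ ‖Φ b * π (Δ n)‖ + ‖π b * π (Δ n)‖ := by
      intro n
      have hΦab : Φ a - π a = Φ b - π b := by
        rw [hb, map_sub, map_sub, hagree s hs]
        abel
      rw [hΦab, sub_mul]
      exact norm_sub_le _ _
    have habs : ‖ψ (star b * b)‖ = K := psi_abs_re hψ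
    -- sqrt comparison helper
    have hsqrt : ∀ ε : ℝ, 0 < ε → Real.sqrt (K + ε^2) ≤ Real.sqrt K + ε := by
      intro ε hε
      have hsq : K + ε^2 ≤ (Real.sqrt K + ε)^2 := by
        nlinarith [Real.sq_sqrt hK0, Real.sqrt_nonneg K]
      calc Real.sqrt (K+ε^2) ≤ Real.sqrt ((Real.sqrt K + ε)^2) := Real.sqrt_le_sqrt hsq
      _ = Real.sqrt K + ε := Real.sqrt_sq (by positivity)
    -- boundedness of the characteristic quantities
    have hbdd : ∀ c : A, IsBoundedUnder (· ≤ ·) atTop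
        (fun n => ‖star (Δ n) * c * Δ n‖) := by
      intro c
      refine isBoundedUnder_of ⟨‖c‖, fun n => ?_⟩
      calc ‖star (Δ n) * c * Δ n‖ ≤ ‖star (Δ n) * c‖ * ‖Δ n‖ := norm_mul_le _ _
      _ ≤ ‖star (Δ n)‖ * ‖c‖ * ‖Δ n‖ :=
          mul_le_mul_of_nonneg_right (norm_mul_le _ _) (norm_nonneg _)
      _ = ‖c‖ := by rw [norm_star, hΔ.1 n, one_mul, mul_one]
    -- Claim A
    have claimA : ∀ ε : ℝ, 0 < ε →
        ∀ᶠ n in atTop, ‖π b * π (Δ n)‖ ≤ Real.sqrt K + ε := by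
      intro ε hε
      have hchar := hΔ.2.2 (star b * b)
      rw [habs] at hchar
      have hev : ∀ᶠ n in atTop, ‖star (Δ n) * (star b * b) * Δ n‖ < K + ε^2 :=
        eventually_lt_of_limsup_lt (lt_of_le_of_lt hchar (by nlinarith)) (hbdd _)
      filter_upwards [hev] with n hn
      have harg : star (b * Δ n) * (b * Δ n) = star (Δ n) * (star b * b) * Δ n := by
        rw [star_mul, mul_assoc, ← mul_assoc (star b) b (Δ n), ← mul_assoc]
      have h3 : ‖b * Δ n‖^2 = ‖star (Δ n) * (star b * b) * Δ n‖ := by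
        rw [sq, ← CStarRing.norm_star_mul_self, harg]
      have h4 : ‖b * Δ n‖ ≤ Real.sqrt (K + ε^2) := by
        have h5 : ‖b * Δ n‖^2 ≤ K + ε^2 := by rw [h3]; exact hn.le
        have h6 := Real.sqrt_le_sqrt h5
        rwa [Real.sqrt_sq (norm_nonneg _)] at h6
      calc ‖π b * π (Δ n)‖ = ‖π (b * Δ n)‖ := by rw [map_mul]
      _ ≤ ‖b * Δ n‖ := hπle _
      _ ≤ Real.sqrt (K+ε^2) := h4
      _ ≤ Real.sqrt K + ε := hsqrt ε hε
    -- Claim B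
    have claimB : ∀ ε : ℝ, 0 < ε →
        ∀ᶠ n in atTop, ‖Φ b * π (Δ n)‖ ≤ Real.sqrt K + ε := by
      intro ε hε
      set κ := ‖star b * b‖ with hκ
      have hκ0 : (0:ℝ) ≤ κ := norm_nonneg _
      set t := ε^2/(4*(K+1)) with htdef
      have ht : 0 < t := by positivity
      set C' := (1+1/t)*(2*κ) + 2*κ with hC'def
      have hC'0 : 0 ≤ C' := by positivity
      set C'' := (1+t) + C' with hC''def
      have hC''0 : 0 < C'' := by positivity
      set D0 := ε^2/(4*(C''+1)) with hD0def
      have hD00 : 0 < D0 := by positivity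
      set δ := min 1 (D0^2/2) with hδdef
      have hδ0 : 0 < δ := lt_min one_pos (by positivity)
      have hδ1 : δ ≤ 1 := min_le_left _ _
      have hδD2 : δ ≤ D0^2/2 := min_le_right _ _
      have hδD : Real.sqrt δ ≤ D0 := by
        have h1 : δ ≤ D0^2 := by nlinarith [sq_nonneg D0]
        calc Real.sqrt δ ≤ Real.sqrt (D0^2) := Real.sqrt_le_sqrt h1
        _ = D0 := Real.sqrt_sq hD00.le
      have hδle : δ ≤ D0 := by
        rcases le_or_gt D0 1 with hcase | hcase
        · nlinarith
        · linarith
      -- choose m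
      have htend : Tendsto (fun m => (ψ (Δ m)).re) atTop (nhds 1) := by
        have h1 := (Complex.continuous_re.tendsto 1).comp hΔ.2.1
        exact h1
      have ev1 : ∀ᶠ m in atTop, 1 - δ/2 < (ψ (Δ m)).re :=
        htend.eventually (eventually_gt_nhds (by linarith))
      have ev2 : ∀ᶠ m in atTop, ‖star (Δ m) * (star b * b) * Δ m‖ < K + δ := by
        have hchar := hΔ.2.2 (star b * b)
        rw [habs] at hchar
        exact eventually_lt_of_limsup_lt (lt_of_le_of_lt hchar (by linarith)) (hbdd _)
      obtain ⟨m, hm1, hm2⟩ := (ev1.and ev2).exists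
      have hβ : ‖ψ (star (1 - Δ m) * (1 - Δ m))‖ < δ := by
        have h1 := beta_bound hψ (hΔ.1 m)
        linarith
      -- eventual in n
      have ev3 : ∀ᶠ n in atTop,
          ‖star (Δ n) * (star (1 - Δ m) * (1 - Δ m)) * Δ n‖ < δ :=
        eventually_lt_of_limsup_lt (lt_of_le_of_lt (hΔ.2.2 _) hβ) (hbdd _)
      filter_upwards [ev3] with n hn
      have hρn : ‖(1 - Δ m) * Δ n‖ ≤ Real.sqrt δ := by
        have harg : star ((1 - Δ m) * Δ n) * ((1 - Δ m) * Δ n)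
            = star (Δ n) * (star (1 - Δ m) * (1 - Δ m)) * Δ n := by
          rw [star_mul, mul_assoc, ← mul_assoc (star (1 - Δ m)) (1 - Δ m) (Δ n),
            ← mul_assoc]
        have h1 : ‖(1 - Δ m) * Δ n‖^2 ≤ δ := by
          rw [sq, ← CStarRing.norm_star_mul_self, harg]; exact hn.le
        have h2 := Real.sqrt_le_sqrt h1
        rwa [Real.sqrt_sq (norm_nonneg _)] at h2
      have hγm : ‖star (Δ m) * (star b * b * Δ m)‖ ≤ K + δ := by
        rw [← mul_assoc]; exact hm2.le
      -- numeric inequality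
      have hnum : (1+t)*(K+δ) + C'*Real.sqrt δ ≤ K + ε^2 := by
        have h1 : t*(K+1) = ε^2/4 := by rw [htdef]; field_simp
        have h2 : t*K ≤ ε^2/4 := by nlinarith
        have h3 : D0*(C''+1) = ε^2/4 := by rw [hD0def]; field_simp
        have h4 : C''*D0 ≤ ε^2/4 := by nlinarith
        have h5 : (1+t)*δ ≤ (1+t)*D0 :=
          mul_le_mul_of_nonneg_left hδle (by positivity)
        have h6 : C'*Real.sqrt δ ≤ C'*D0 := mul_le_mul_of_nonneg_left hδD hC'0
        have h7 : (1+t)*D0 + C'*D0 = C''*D0 := by rw [hC''def]; ring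
        nlinarith
      -- operator norm bound
      have hle : ∀ u : H, ‖(Φ b * π (Δ n)) u‖ ≤ (Real.sqrt K + ε) * ‖u‖ := by
        intro u
        have h1 := perN hΦ hπle b (Δ m) (Δ n) (hΔ.1 m) (hΔ.1 n)
          (hagree (Δ m) (hΔS m)) ht hγm hρn u
        have h2 : ‖(Φ b * π (Δ n)) u‖^2 ≤ (K + ε^2) * ‖u‖^2 := by
          have h3 : ((1+t)*(K+δ) + ((1+1/t)*(2*κ) + 2*κ)*Real.sqrt δ) * ‖u‖^2
              ≤ (K + ε^2) * ‖u‖^2 := by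
            apply mul_le_mul_of_nonneg_right _ (sq_nonneg _)
            rw [← hC'def] at *
            exact hnum
          exact h1.trans h3
        have h4 : ‖(Φ b * π (Δ n)) u‖ ≤ Real.sqrt ((K + ε^2) * ‖u‖^2) := by
          have h5 := Real.sqrt_le_sqrt h2
          rwa [Real.sqrt_sq (norm_nonneg _)] at h5
        calc ‖(Φ b * π (Δ n)) u‖ ≤ Real.sqrt ((K + ε^2) * ‖u‖^2) := h4
        _ = Real.sqrt (K + ε^2) * ‖u‖ := by
            rw [Real.sqrt_mul (by positivity), Real.sqrt_sq (norm_nonneg u)]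
        _ ≤ (Real.sqrt K + ε) * ‖u‖ :=
            mul_le_mul_of_nonneg_right (hsqrt ε hε) (norm_nonneg u)
      exact ContinuousLinearMap.opNorm_le_bound _ (by positivity) hle
    -- combine the claims
    have hcomb : ∀ ε : ℝ, 0 < ε →
        limsup (fun n => ‖(Φ a - π a) * π (Δ n)‖) atTop ≤ 2*Real.sqrt K + 2*ε := by
      intro ε hε
      have hco : IsCoboundedUnder (· ≤ ·) atTop
          (fun n => ‖(Φ a - π a) * π (Δ n)‖) :=
        isCoboundedUnder_le_of_le atTop (x := 0) (fun n => norm_nonneg _)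
      apply limsup_le_of_le hco
      filter_upwards [claimA ε hε, claimB ε hε] with n h1 h2
      calc ‖(Φ a - π a) * π (Δ n)‖ ≤ ‖Φ b * π (Δ n)‖ + ‖π b * π (Δ n)‖ := hsplit n
      _ ≤ (Real.sqrt K + ε) + (Real.sqrt K + ε) := add_le_add h2 h1
      _ = 2*Real.sqrt K + 2*ε := by ring
    have hlim : limsup (fun n => ‖(Φ a - π a) * π (Δ n)‖) atTop ≤ 2*Real.sqrt K := by
      apply le_of_forall_pos_le_add
      intro ε hε
      have h1 := hcomb (ε/2) (by positivity)
      linarith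
    calc limsup (fun n => ‖(Φ a - π a) * π (Δ n)‖) atTop ≤ 2*Real.sqrt K := hlim
    _ ≤ 2*dist (σ a) (σ s) := by linarith
  constructor
  · have hne : Nonempty ↥((fun s => σ s) '' (S : Set A)) :=
      ⟨⟨σ 0, ⟨0, S.zero_mem, rfl⟩⟩⟩
    have h2 : limsup (fun n => ‖(Φ a - π a) * π (Δ n)‖) atTop / 2
        ≤ Metric.infDist (σ a) ((fun s => σ s) '' (S : Set A)) := by
      rw [Metric.infDist_eq_iInf]
      apply le_ciInf
      rintro ⟨y, hy⟩
      obtain ⟨s, hs, rfl⟩ := hy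
      have := main s hs
      simp only [Subtype.coe_mk]
      linarith
    linarith
  · exact heq
end
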